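/- arXiv:2109.14858 — 3 statements merged into one kernel-verified Lean document; each statement's English description precedes it below -/
import Mathlib

section
/- Let u be a solution of problem (P3). Then u(0) > 0. -/
open Real Filter Set MeasureTheory

noncomputable section

/-- Condition (V1): `V` is `C²` on `(0,∞)`, `r^{N-1}|V(r)|^q` is integrable near `0`
for some `q > N`, and `liminf_{r→∞} V(r)/log r > 1 - N` (possibly `+∞`). -/
def CondV1 (N : ℕ) (V : ℝ → ℝ) : Prop :=
  ContDiffOn ℝ 2 V (Set.Ioi 0) ∧
  (∃ q : ℝ, (N : ℝ) < q ∧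
    MeasureTheory.IntegrableOn (fun r : ℝ => r ^ (N - 1) * |V r| ^ q) (Set.Ioc 0 1)) ∧
  (∃ c : ℝ, 1 - (N : ℝ) < c ∧ ∀ᶠ r : ℝ in Filter.atTop, c ≤ V r / Real.log r)

/-- Condition (Vab): `a` is `C²` with compact support, `b` is `C³` with compact support,
`b ≥ 0` and `b ≡ 1` in a neighborhood of `0`. -/
def CondVab (a b : ℝ → ℝ) : Prop :=
  ContDiff ℝ 2 a ∧ HasCompactSupport a ∧
  ContDiff ℝ 3 b ∧ HasCompactSupport b ∧
  (∀ r : ℝ, 0 ≤ b r) ∧ (∀ᶠ r in nhds (0 : ℝ), b r = 1)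

/-- `θ ∈ Θ`: `θ ∈ (1-N, ∞)` and `liminf_{r→∞} (V(r) - θ log r) > -∞`. -/
def MemTheta (N : ℕ) (V : ℝ → ℝ) (θ : ℝ) : Prop :=
  1 - (N : ℝ) < θ ∧ ∃ M : ℝ, ∀ᶠ r : ℝ in Filter.atTop, M ≤ V r - θ * Real.log r

/-- A solution of problem (P3): `u ∈ C([0,∞)) ∩ C²((0,∞))`, differentiable at `0` with
`u'(0) = 0`, satisfying `u'' + ((N-1)/r)u' - V_δ u + B_δ u log u² = 0` and `u > 0` on
`(0,∞)`, and `r^{-θ/2} u(r) → 0` as `r → ∞`. -/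
def SolP3 (N : ℕ) (Vδ Bδ : ℝ → ℝ) (θ : ℝ) (u : ℝ → ℝ) : Prop :=
  ContinuousOn u (Set.Ici 0) ∧
  ContDiffOn ℝ 2 u (Set.Ioi 0) ∧
  (∀ r : ℝ, 0 < r →
    deriv (deriv u) r + ((N : ℝ) - 1) / r * deriv u r
      - Vδ r * u r + Bδ r * (u r * Real.log (u r ^ 2)) = 0) ∧
  (∀ r : ℝ, 0 < r → 0 < u r) ∧
  HasDerivWithinAt u 0 (Set.Ici 0) 0 ∧
  Filter.Tendsto (fun r : ℝ => r ^ (-(θ / 2)) * u r) Filter.atTop (nhds 0)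


lemma two_le_e : (2:ℝ) ≤ Real.exp 1 := by
  have := Real.add_one_le_exp (1:ℝ); linarith

lemma om_nonneg {x : ℝ} (h0 : 0 ≤ x) (h1 : x ≤ 1) : 0 ≤ x - x * Real.log x := by
  have h : Real.log x ≤ 0 := Real.log_nonpos h0 h1
  nlinarith

lemma om_pos {x : ℝ} (h0 : 0 < x) (h1 : x ≤ 1) : 0 < x - x * Real.log x := by
  have h : Real.log x ≤ 0 := Real.log_nonpos h0.le h1
  nlinarith

lemma om_hasDerivAt {x : ℝ} (h0 : 0 < x) :
    HasDerivAt (fun y => y - y * Real.log y) (-Real.log x) x := by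
  have h := (hasDerivAt_id x).mul (Real.hasDerivAt_log h0.ne')
  have h2 := (hasDerivAt_id x).sub h
  refine h2.congr_deriv ?_
  rw [id, mul_inv_cancel₀ h0.ne']; ring

lemma om_monotoneOn : MonotoneOn (fun y => y - y * Real.log y) (Set.Icc 0 1) := by
  apply monotoneOn_of_deriv_nonneg (convex_Icc 0 1)
  · exact (continuous_id.sub Real.continuous_mul_log).continuousOn
  · intro x hx
    rw [interior_Icc] at hx
    exact (om_hasDerivAt hx.1).differentiableAt.differentiableWithinAt
  · intro x hx
    rw [interior_Icc] at hx
    rw [(om_hasDerivAt hx.1).deriv]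
    simpa using Real.log_nonpos hx.1.le hx.2.le

lemma om_mono {x y : ℝ} (h0 : 0 ≤ x) (hxy : x ≤ y) (h1 : y ≤ 1) :
    x - x * Real.log x ≤ y - y * Real.log y :=
  om_monotoneOn ⟨h0, hxy.trans h1⟩ ⟨h0.trans hxy, h1⟩ hxy

lemma exp_neg_one_le_one : Real.exp (-1) ≤ 1 := by
  rw [Real.exp_le_one_iff]; norm_num

lemma om_le_one {x : ℝ} (h0 : 0 ≤ x) (hx : x ≤ Real.exp (-1)) :
    x - x * Real.log x ≤ 1 := by
  have h1 := om_mono h0 hx exp_neg_one_le_one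
  rw [Real.log_exp] at h1
  have h2 : Real.exp (-1) - Real.exp (-1) * (-1) = 2 * Real.exp (-1) := by ring
  rw [h2] at h1
  have h3 : Real.exp (-1) * Real.exp 1 = 1 := by
    rw [← Real.exp_add]; norm_num
  have h4 := two_le_e
  have h5 : (0:ℝ) < Real.exp (-1) := Real.exp_pos _
  nlinarith

lemma primitive_contOn {f : ℝ → ℝ} {ρ : ℝ} (hint : MeasureTheory.IntegrableOn f (Set.Ioc 0 ρ)) :
    ContinuousOn (fun t => ∫ x in (0:ℝ)..t, f x) (Set.Icc 0 ρ) := by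
  have h : MeasureTheory.IntegrableOn f (Set.Icc 0 ρ) := by
    rwa [integrableOn_Icc_iff_integrableOn_Ioc]
  have h2 := intervalIntegral.continuousOn_primitive (f := f) (a := 0) (b := ρ) (μ := volume) h
  refine h2.congr fun t ht => ?_
  rw [intervalIntegral.integral_of_le ht.1]

lemma primitive_intervalIntegrable {f : ℝ → ℝ} {ρ s t : ℝ}
    (hint : MeasureTheory.IntegrableOn f (Set.Ioc 0 ρ))
    (hs0 : 0 ≤ s) (hsρ : s ≤ ρ) (ht0 : 0 ≤ t) (htρ : t ≤ ρ) :
    IntervalIntegrable f volume s t := by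
  rw [intervalIntegrable_iff]
  refine hint.mono_set ?_
  rw [Set.uIoc]
  exact Set.Ioc_subset_Ioc (le_min hs0 ht0) (max_le hsρ htρ)

lemma primitive_mono {f : ℝ → ℝ} {ρ s t : ℝ}
    (hint : MeasureTheory.IntegrableOn f (Set.Ioc 0 ρ))
    (hf : ∀ x ∈ Set.Icc 0 ρ, 0 ≤ f x)
    (hs : 0 ≤ s) (hst : s ≤ t) (ht : t ≤ ρ) :
    ∫ x in (0:ℝ)..s, f x ≤ ∫ x in (0:ℝ)..t, f x := by
  have hIs := primitive_intervalIntegrable hint le_rfl ((hs.trans hst).trans ht) hs (hst.trans ht)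
  have hIt := primitive_intervalIntegrable hint le_rfl ((hs.trans hst).trans ht) (hs.trans hst) ht
  have h2 : (∫ x in (0:ℝ)..t, f x) - ∫ x in (0:ℝ)..s, f x = ∫ x in s..t, f x :=
    intervalIntegral.integral_interval_sub_left hIt hIs
  have h3 : 0 ≤ ∫ x in s..t, f x :=
    intervalIntegral.integral_nonneg hst fun x hx => hf x ⟨hs.trans hx.1, hx.2.trans ht⟩
  linarith

lemma primitive_nonneg {f : ℝ → ℝ} {ρ t : ℝ}
    (hint : MeasureTheory.IntegrableOn f (Set.Ioc 0 ρ))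
    (hf : ∀ x ∈ Set.Icc 0 ρ, 0 ≤ f x)
    (ht0 : 0 ≤ t) (htρ : t ≤ ρ) :
    0 ≤ ∫ x in (0:ℝ)..t, f x :=
  intervalIntegral.integral_nonneg ht0 fun x hx => hf x ⟨hx.1, hx.2.trans htρ⟩



lemma Vabs_integrable {N : ℕ} (hN : 2 ≤ N) {V : ℝ → ℝ} {q : ℝ} (hqN : (N:ℝ) < q)
    (hVreg : ContDiffOn ℝ 2 V (Set.Ioi 0))
    (hVq : MeasureTheory.IntegrableOn (fun r : ℝ => r ^ (N - 1) * |V r| ^ q) (Set.Ioc 0 1)) :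
    MeasureTheory.IntegrableOn (fun x : ℝ => |V x|) (Set.Ioc 0 1) := by
  have hNR : (2:ℝ) ≤ (N:ℝ) := by exact_mod_cast hN
  have hq1 : (1:ℝ) < q := by linarith
  set α : ℝ := ((N:ℝ) - 1) / (q - 1) with hα
  have hα1 : α < 1 := by
    rw [hα, div_lt_one (by linarith)]; linarith
  have hrint : MeasureTheory.IntegrableOn (fun x : ℝ => x ^ (-α)) (Set.Ioc 0 1) := by
    have h := intervalIntegral.intervalIntegrable_rpow' (r := -α) (a := 0) (b := 1) (by linarith)
    rwa [intervalIntegrable_iff_integrableOn_Ioc_of_le (by norm_num : (0:ℝ) ≤ 1)] at h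
  have hVcont : ContinuousOn V (Set.Ioi 0) := hVreg.continuousOn
  have hVmeas : AEStronglyMeasurable (fun x => |V x|) (volume.restrict (Set.Ioc 0 1)) :=
    ((hVcont.mono (Set.Ioc_subset_Ioi_self)).abs).aestronglyMeasurable measurableSet_Ioc
  have hdom : MeasureTheory.IntegrableOn
      (fun x : ℝ => x ^ (N - 1) * |V x| ^ q + x ^ (-α)) (Set.Ioc 0 1) := hVq.add hrint
  refine hdom.mono' hVmeas ?_
  filter_upwards [MeasureTheory.ae_restrict_mem measurableSet_Ioc] with x hx
  rw [Real.norm_eq_abs, abs_abs]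
  rcases le_or_gt (|V x|) (x ^ (-α)) with h | h
  · have h1 : 0 ≤ x ^ (N - 1) * |V x| ^ q :=
      mul_nonneg (pow_nonneg hx.1.le _) (Real.rpow_nonneg (abs_nonneg _) _)
    linarith
  · have hxpos : 0 < x := hx.1
    have hm : (0:ℝ) < x ^ (-α) := Real.rpow_pos_of_pos hxpos _
    have hVpos : 0 < |V x| := lt_trans hm h
    have h2 : x ^ (-α * (q - 1)) ≤ |V x| ^ (q - 1) := by
      have h3 := Real.rpow_le_rpow hm.le h.le (by linarith : (0:ℝ) ≤ q - 1)
      rwa [← Real.rpow_mul hxpos.le] at h3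
    have hαq : -α * (q - 1) = -((N:ℝ) - 1) := by
      rw [hα, neg_mul, div_mul_cancel₀ _ (by linarith : q - 1 ≠ 0)]
    rw [hαq] at h2
    have hxp : (x : ℝ) ^ (N - 1 : ℕ) = x ^ ((N:ℝ) - 1) := by
      rw [← Real.rpow_natCast x (N - 1), Nat.cast_sub (by omega), Nat.cast_one]
    have hxpow_pos : (0:ℝ) < x ^ ((N:ℝ) - 1) := Real.rpow_pos_of_pos hxpos _
    have h4 : (1:ℝ) ≤ x ^ ((N:ℝ) - 1) * |V x| ^ (q - 1) := by
      have h5 : x ^ ((N:ℝ) - 1) * x ^ (-((N:ℝ) - 1)) = 1 := by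
        rw [← Real.rpow_add hxpos]; simp
      nlinarith
    have h6 : |V x| ^ (q - 1) * |V x| = |V x| ^ q := by
      rw [← Real.rpow_add_one hVpos.ne']; ring_nf
    have h7 : 0 ≤ x ^ (-α) := hm.le
    have h8 : x ^ (N - 1 : ℕ) * |V x| ^ q = (x ^ ((N:ℝ) - 1) * |V x| ^ (q - 1)) * |V x| := by
      rw [hxp, mul_assoc, h6]
    nlinarith

lemma flux_limit_zero {u W : ℝ → ℝ} {ρ cc : ℝ} {N : ℕ} (hN : 2 ≤ N)
    (hρpos : 0 < ρ) (hρ1 : ρ ≤ 1)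
    (hupos : ∀ r : ℝ, 0 < r → 0 < u r)
    (hue : ∀ x ∈ Set.Ioc (0:ℝ) ρ, u x ≤ Real.exp (-1))
    (huD : ∀ x ∈ Set.Ioi (0:ℝ), HasDerivAt u (deriv u x) x)
    (hu'cont : ContinuousOn (deriv u) (Set.Ioi 0))
    (hconst : ∀ s ∈ Set.Ioc (0:ℝ) ρ, s ^ (N - 1) * deriv u s - W s = cc)
    (hWto0 : Filter.Tendsto W (nhdsWithin 0 (Set.Ioi 0)) (nhds 0)) :
    cc = 0 := by
  by_contra hcne
  have hwto : Filter.Tendsto (fun s => s ^ (N - 1) * deriv u s)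
      (nhdsWithin 0 (Set.Ioi 0)) (nhds cc) := by
    have hev : ∀ᶠ s in nhdsWithin 0 (Set.Ioi 0), W s + cc = s ^ (N - 1) * deriv u s := by
      filter_upwards [Ioc_mem_nhdsGT hρpos] with s hs
      have := hconst s hs
      linarith
    have h2 : Filter.Tendsto (fun s => W s + cc) (nhdsWithin 0 (Set.Ioi 0)) (nhds (0 + cc)) :=
      hWto0.add tendsto_const_nhds
    rw [zero_add] at h2
    exact h2.congr' hev
  have huFTC : ∀ s t0 : ℝ, 0 < s → s ≤ t0 → t0 ≤ ρ →
      u t0 - u s = ∫ x in s..t0, deriv u x := by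
    intro s t0 hs hst ht0
    have hsub : Set.uIcc s t0 ⊆ Set.Ioi (0:ℝ) := by
      rw [Set.uIcc_of_le hst]
      intro x hx
      exact lt_of_lt_of_le hs hx.1
    exact (intervalIntegral.integral_eq_sub_of_hasDerivAt
      (fun x hx => huD x (hsub hx)) ((hu'cont.mono hsub).intervalIntegrable)).symm
  have hInt_inv : ∀ s t0 : ℝ, 0 < s → s ≤ t0 →
      ∫ x in s..t0, x⁻¹ = Real.log t0 - Real.log s := by
    intro s t0 hs hst
    rw [_root_.integral_inv (by
      rw [Set.uIcc_of_le hst]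
      intro hmem
      exact absurd hmem.1 (not_le.2 hs))]
    rw [Real.log_div (by linarith : t0 ≠ 0) (by linarith : s ≠ 0)]
  have hII_inv : ∀ s t0 : ℝ, 0 < s → s ≤ t0 →
      IntervalIntegrable (fun x : ℝ => x⁻¹) MeasureTheory.volume s t0 := by
    intro s t0 hs hst
    apply intervalIntegral.intervalIntegrable_inv
    · intro x hx
      rw [Set.uIcc_of_le hst] at hx
      exact ne_of_gt (lt_of_lt_of_le hs hx.1)
    · exact continuousOn_id
  rcases lt_or_gt_of_ne hcne with hneg | hpos
  · -- cc < 0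
    have hev := (hwto.eventually_lt_const (by linarith : cc < cc/2)).and
      (Ioc_mem_nhdsGT hρpos)
    obtain ⟨t1, ht1, hsubset⟩ := mem_nhdsGT_iff_exists_Ioc_subset.1 hev
    set t0 : ℝ := min t1 ρ with ht0def
    have ht0pos : 0 < t0 := lt_min ht1 hρpos
    have ht0ρ : t0 ≤ ρ := min_le_right _ _
    have hprop : ∀ s : ℝ, 0 < s → s ≤ t0 → deriv u s ≤ cc/2 * s⁻¹ := by
      intro s hs hst
      obtain ⟨h1, h2⟩ := hsubset ⟨hs, hst.trans (min_le_left _ _)⟩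
      have hs1 : s ≤ 1 := (hst.trans ht0ρ).trans hρ1
      have hsp : 0 < s ^ (N - 1) := pow_pos hs _
      have hsle : s ^ (N - 1) ≤ s := by
        have h := pow_le_pow_of_le_one hs.le hs1 (show 1 ≤ N - 1 by omega)
        rwa [pow_one] at h
      have hd_neg : deriv u s < 0 := by nlinarith
      have h3 : s * deriv u s ≤ s ^ (N - 1) * deriv u s := by nlinarith
      have h4 : s * deriv u s < cc/2 := lt_of_le_of_lt h3 h1
      have h5 : deriv u s = (s * deriv u s) * s⁻¹ := by field_simp
      rw [h5]
      exact mul_le_mul_of_nonneg_right h4.le (inv_nonneg.2 hs.le)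
    have hbound : ∀ s : ℝ, 0 < s → s ≤ t0 → u t0 - u s ≤ cc/2 * (Real.log t0 - Real.log s) := by
      intro s hs hst
      rw [huFTC s t0 hs hst ht0ρ]
      have hsub : Set.uIcc s t0 ⊆ Set.Ioi (0:ℝ) := by
        rw [Set.uIcc_of_le hst]
        intro x hx
        exact lt_of_lt_of_le hs hx.1
      have h1 : ∫ x in s..t0, deriv u x ≤ ∫ x in s..t0, cc/2 * x⁻¹ := by
        apply intervalIntegral.integral_mono_on hst
          ((hu'cont.mono hsub).intervalIntegrable)
          ((hII_inv s t0 hs hst).const_mul _)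
        intro x hx
        exact hprop x (lt_of_lt_of_le hs hx.1) hx.2
      have h2 : ∫ x in s..t0, cc/2 * x⁻¹ = cc/2 * (Real.log t0 - Real.log s) := by
        rw [intervalIntegral.integral_const_mul, hInt_inv s t0 hs hst]
      linarith
    have htends : Filter.Tendsto (fun s : ℝ => cc/2 * (Real.log t0 - Real.log s))
        (nhdsWithin 0 (Set.Ioi 0)) Filter.atBot := by
      have h1 : Filter.Tendsto (fun s : ℝ => Real.log t0 - Real.log s)
          (nhdsWithin 0 (Set.Ioi 0)) Filter.atTop := by
        have h2 : Filter.Tendsto (fun s : ℝ => -Real.log s)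
            (nhdsWithin 0 (Set.Ioi 0)) Filter.atTop :=
          Filter.tendsto_neg_atBot_atTop.comp Real.tendsto_log_nhdsGT_zero
        have h3 := Filter.tendsto_atTop_add_const_left _ (Real.log t0) h2
        refine h3.congr fun s => ?_
        ring
      exact Filter.Tendsto.const_mul_atTop_of_neg (by linarith) h1
    obtain ⟨s, hs1, hs2⟩ := ((htends.eventually_lt_atBot (u t0 - Real.exp (-1))).and
      (Ioc_mem_nhdsGT ht0pos)).exists
    have h5 := hbound s hs2.1 hs2.2
    have h6 : u s ≤ Real.exp (-1) := hue s ⟨hs2.1, hs2.2.trans ht0ρ⟩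
    linarith
  · -- cc > 0
    have hev := (hwto.eventually_const_lt (by linarith : cc/2 < cc)).and
      (Ioc_mem_nhdsGT hρpos)
    obtain ⟨t1, ht1, hsubset⟩ := mem_nhdsGT_iff_exists_Ioc_subset.1 hev
    set t0 : ℝ := min t1 ρ with ht0def
    have ht0pos : 0 < t0 := lt_min ht1 hρpos
    have ht0ρ : t0 ≤ ρ := min_le_right _ _
    have hprop : ∀ s : ℝ, 0 < s → s ≤ t0 → cc/2 * s⁻¹ ≤ deriv u s := by
      intro s hs hst
      obtain ⟨h1, h2⟩ := hsubset ⟨hs, hst.trans (min_le_left _ _)⟩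
      have hs1 : s ≤ 1 := (hst.trans ht0ρ).trans hρ1
      have hsp : 0 < s ^ (N - 1) := pow_pos hs _
      have hsle : s ^ (N - 1) ≤ s := by
        have h := pow_le_pow_of_le_one hs.le hs1 (show 1 ≤ N - 1 by omega)
        rwa [pow_one] at h
      have hd_pos : 0 < deriv u s := by nlinarith
      have h3 : s ^ (N - 1) * deriv u s ≤ s * deriv u s := by nlinarith
      have h4 : cc/2 < s * deriv u s := lt_of_lt_of_le h1 h3
      have h5 : deriv u s = (s * deriv u s) * s⁻¹ := by field_simp
      rw [h5]
      exact mul_le_mul_of_nonneg_right h4.le (inv_nonneg.2 hs.le)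
    have hbound : ∀ s : ℝ, 0 < s → s ≤ t0 → cc/2 * (Real.log t0 - Real.log s) ≤ u t0 - u s := by
      intro s hs hst
      rw [huFTC s t0 hs hst ht0ρ]
      have hsub : Set.uIcc s t0 ⊆ Set.Ioi (0:ℝ) := by
        rw [Set.uIcc_of_le hst]
        intro x hx
        exact lt_of_lt_of_le hs hx.1
      have h1 : ∫ x in s..t0, cc/2 * x⁻¹ ≤ ∫ x in s..t0, deriv u x := by
        apply intervalIntegral.integral_mono_on hst
          ((hII_inv s t0 hs hst).const_mul _)
          ((hu'cont.mono hsub).intervalIntegrable)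
        intro x hx
        exact hprop x (lt_of_lt_of_le hs hx.1) hx.2
      have h2 : ∫ x in s..t0, cc/2 * x⁻¹ = cc/2 * (Real.log t0 - Real.log s) := by
        rw [intervalIntegral.integral_const_mul, hInt_inv s t0 hs hst]
      linarith
    have htends : Filter.Tendsto (fun s : ℝ => cc/2 * (Real.log t0 - Real.log s))
        (nhdsWithin 0 (Set.Ioi 0)) Filter.atTop := by
      have h1 : Filter.Tendsto (fun s : ℝ => Real.log t0 - Real.log s)
          (nhdsWithin 0 (Set.Ioi 0)) Filter.atTop := by
        have h2 : Filter.Tendsto (fun s : ℝ => -Real.log s)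
            (nhdsWithin 0 (Set.Ioi 0)) Filter.atTop :=
          Filter.tendsto_neg_atBot_atTop.comp Real.tendsto_log_nhdsGT_zero
        have h3 := Filter.tendsto_atTop_add_const_left _ (Real.log t0) h2
        refine h3.congr fun s => ?_
        ring
      exact Filter.Tendsto.const_mul_atTop (by linarith) h1
    obtain ⟨s, hs1, hs2⟩ := ((htends.eventually_gt_atTop (u t0)).and
      (Ioc_mem_nhdsGT ht0pos)).exists
    have h5 := hbound s hs2.1 hs2.2
    have h6 : 0 < u s := hupos s hs2.1
    linarith

lemma osgood_false {G₁ M R K : ℝ → ℝ} {ρ A₁ : ℝ}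
    (hρpos : 0 < ρ) (hA₁0 : 0 ≤ A₁) (hA₁ρ : A₁ * ρ ≤ 1/2)
    (hRcont : ContinuousOn R (Set.Icc 0 ρ))
    (hKcont : ContinuousOn K (Set.Icc 0 ρ))
    (hRD : ∀ x ∈ Set.Ioo (0:ℝ) ρ, HasDerivAt R (G₁ x * (M x - M x * Real.log (M x))) x)
    (hKD : ∀ x ∈ Set.Ioo (0:ℝ) ρ, HasDerivAt K (G₁ x) x)
    (hG₁nonneg : ∀ x ∈ Set.Ioo (0:ℝ) ρ, 0 ≤ G₁ x)
    (hRpos : ∀ t ∈ Set.Ioc (0:ℝ) ρ, 0 < R t)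
    (hRle : ∀ t ∈ Set.Icc (0:ℝ) ρ, R t ≤ A₁ * t)
    (hMnonneg : ∀ x ∈ Set.Ioo (0:ℝ) ρ, 0 ≤ M x)
    (hM_le_R : ∀ x ∈ Set.Ioo (0:ℝ) ρ, M x ≤ R x)
    (hKnonneg : ∀ t ∈ Set.Icc (0:ℝ) ρ, 0 ≤ K t) : False := by
  have hRsmall : ∀ t ∈ Set.Ioc (0:ℝ) ρ, R t ≤ 1/2 := by
    intro t ht
    have h1 := hRle t ⟨ht.1.le, ht.2⟩
    have h2 : A₁ * t ≤ A₁ * ρ := mul_le_mul_of_nonneg_left ht.2 hA₁0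
    linarith
  have hlogRneg : ∀ t ∈ Set.Ioc (0:ℝ) ρ, Real.log (R t) < 0 := fun t ht =>
    Real.log_neg (hRpos t ht) (by linarith [hRsmall t ht])
  have h1R : ∀ t ∈ Set.Ioc (0:ℝ) ρ, (0:ℝ) < 1 - Real.log (R t) := fun t ht => by
    linarith [hlogRneg t ht]
  set D : ℝ → ℝ := fun t => -Real.log (1 - Real.log (R t)) - K t with hD
  have hDanti : ∀ ε : ℝ, 0 < ε → ε < ρ → D ρ ≤ D ε := by
    intro ε hε hερ
    have hsub : Set.Icc ε ρ ⊆ Set.Ioc 0 ρ := fun x hx => ⟨lt_of_lt_of_le hε hx.1, hx.2⟩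
    have hsub' : Set.Icc ε ρ ⊆ Set.Icc 0 ρ := fun x hx => ⟨(hε.trans_le hx.1).le, hx.2⟩
    have hDcont : ContinuousOn D (Set.Icc ε ρ) := by
      apply ContinuousOn.sub _ (hKcont.mono hsub')
      apply ContinuousOn.neg
      apply ContinuousOn.log
      · apply ContinuousOn.sub continuousOn_const
        apply ContinuousOn.log (hRcont.mono hsub')
        intro x hx
        exact (hRpos x (hsub hx)).ne'
      · intro x hx
        exact (h1R x (hsub hx)).ne'
    have hderiv : ∀ x ∈ Set.Ioo ε ρ, HasDerivAt D
        (G₁ x * (M x - M x * Real.log (M x)) / R x / (1 - Real.log (R x)) - G₁ x) x := by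
      intro x hx
      have hx' : x ∈ Set.Ioo 0 ρ := ⟨hε.trans hx.1, hx.2⟩
      have hx'' : x ∈ Set.Ioc 0 ρ := ⟨hε.trans hx.1, hx.2.le⟩
      have hR' := hRD x hx'
      have hD1 := hR'.log (hRpos x hx'').ne'
      have hD2 := hD1.const_sub 1
      have hD3 := (hD2.log (h1R x hx'').ne').neg.sub (hKD x hx')
      refine hD3.congr_deriv ?_
      ring
    have hanti : AntitoneOn D (Set.Icc ε ρ) := by
      apply antitoneOn_of_deriv_nonpos (convex_Icc ε ρ) hDcont
      · intro x hx
        rw [interior_Icc] at hx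
        exact (hderiv x hx).differentiableAt.differentiableWithinAt
      · intro x hx
        rw [interior_Icc] at hx
        rw [(hderiv x hx).deriv]
        have hx' : x ∈ Set.Ioo 0 ρ := ⟨hε.trans hx.1, hx.2⟩
        have hx'' : x ∈ Set.Ioc 0 ρ := ⟨hε.trans hx.1, hx.2.le⟩
        have hωM_le : M x - M x * Real.log (M x) ≤ R x - R x * Real.log (R x) :=
          om_mono (hMnonneg x hx') (hM_le_R x hx') (by linarith [hRsmall x hx''])
        have hRp := hRpos x hx''
        have h1Rp := h1R x hx''
        have hG := hG₁nonneg x hx'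
        have h2 : G₁ x * (M x - M x * Real.log (M x)) ≤ G₁ x * (R x - R x * Real.log (R x)) :=
          mul_le_mul_of_nonneg_left hωM_le hG
        have h3 : G₁ x * (M x - M x * Real.log (M x)) / (R x * (1 - Real.log (R x))) ≤ G₁ x := by
          rw [div_le_iff₀ (by positivity)]
          nlinarith
        have h4 : G₁ x * (M x - M x * Real.log (M x)) / R x / (1 - Real.log (R x))
            = G₁ x * (M x - M x * Real.log (M x)) / (R x * (1 - Real.log (R x))) := by
          rw [div_div]
        rw [h4]
        linarith
    exact hanti ⟨le_rfl, hερ.le⟩ ⟨hερ.le, le_rfl⟩ hερ.le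
  set c₀ : ℝ := D ρ with hc₀
  set ε₀ : ℝ := min (ρ/2) (Real.exp (-Real.exp (-c₀)) / (2 * (A₁ + 1))) with hε₀
  have hε₀pos : 0 < ε₀ := lt_min (by linarith) (by positivity)
  have hε₀ρ : ε₀ < ρ := lt_of_le_of_lt (min_le_left _ _) (by linarith)
  have h1 := hDanti ε₀ hε₀pos hε₀ρ
  have hK0 : 0 ≤ K ε₀ := hKnonneg ε₀ ⟨hε₀pos.le, hε₀ρ.le⟩
  have h2 : c₀ ≤ -Real.log (1 - Real.log (R ε₀)) := by
    have hDε : D ε₀ = -Real.log (1 - Real.log (R ε₀)) - K ε₀ := rfl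
    rw [hc₀] at *
    linarith [h1, hK0, hDε.le, hDε.ge]
  have hRεle : R ε₀ ≤ A₁ * ε₀ := hRle ε₀ ⟨hε₀pos.le, hε₀ρ.le⟩
  have hRε : R ε₀ < Real.exp (-Real.exp (-c₀)) := by
    have hε₀le : ε₀ ≤ Real.exp (-Real.exp (-c₀)) / (2 * (A₁ + 1)) := min_le_right _ _
    have hexp : 0 < Real.exp (-Real.exp (-c₀)) := Real.exp_pos _
    have h3 : A₁ * ε₀ ≤ A₁ * (Real.exp (-Real.exp (-c₀)) / (2 * (A₁ + 1))) :=
      mul_le_mul_of_nonneg_left hε₀le hA₁0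
    have h5 : A₁ * (Real.exp (-Real.exp (-c₀)) / (2 * (A₁ + 1)))
        = (A₁ / (2 * (A₁ + 1))) * Real.exp (-Real.exp (-c₀)) := by ring
    have h6 : A₁ / (2 * (A₁ + 1)) ≤ 1/2 := by
      rw [div_le_div_iff₀ (by positivity) two_pos]
      linarith
    nlinarith
  have hRε0 : 0 < R ε₀ := hRpos ε₀ ⟨hε₀pos, hε₀ρ.le⟩
  have h3 : Real.log (R ε₀) < -Real.exp (-c₀) := by
    have h := Real.log_lt_log hRε0 hRε
    rwa [Real.log_exp] at h
  have h4 : Real.exp (-c₀) < 1 - Real.log (R ε₀) := by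
    have := Real.exp_pos (-c₀)
    linarith
  have h5 : -c₀ < Real.log (1 - Real.log (R ε₀)) := by
    have h6 := Real.log_lt_log (Real.exp_pos (-c₀)) h4
    rwa [Real.log_exp] at h6
  linarith

set_option maxHeartbeats 4000000 in
/-- Let `u` be a solution of problem (P3). Then `u(0) > 0`. -/
theorem sol_P3_positive_at_zero (N : ℕ) (hN : 2 ≤ N) (V a b : ℝ → ℝ) (δ θ : ℝ)
    (hV1 : CondV1 N V) (hVab : CondVab a b) (hδ : 0 ≤ δ) (hθ : MemTheta N V θ)
    (u : ℝ → ℝ)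
    (hu : SolP3 N (fun r => V r + δ * a r) (fun r => 1 + δ * b r) θ u) :
    0 < u 0 := by
  obtain ⟨hVreg, ⟨q, hqN, hVq⟩, -⟩ := hV1
  obtain ⟨ha2, haC, hb3, hbC, hbnn, -⟩ := hVab
  obtain ⟨hucont, huC2, hode, hupos, -, -⟩ := hu
  by_contra h0
  push_neg at h0
  -- u 0 = 0
  have hu00 : u 0 = 0 := by
    have h1 : Filter.Tendsto u (nhdsWithin 0 (Set.Ioi 0)) (nhds (u 0)) :=
      (hucont 0 Set.self_mem_Ici).mono_left (nhdsWithin_mono _ Set.Ioi_subset_Ici_self)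
    have h2 : 0 ≤ u 0 :=
      ge_of_tendsto h1 (eventually_mem_nhdsWithin.mono fun x hx => (hupos x hx).le)
    linarith
  -- derivatives of u
  have huDiff : DifferentiableOn ℝ u (Set.Ioi 0) := huC2.differentiableOn (by norm_num)
  have huD : ∀ x ∈ Set.Ioi (0:ℝ), HasDerivAt u (deriv u x) x := fun x hx =>
    (((huDiff x hx).differentiableAt (isOpen_Ioi.mem_nhds hx))).hasDerivAt
  have huC1' : ContDiffOn ℝ 1 (deriv u) (Set.Ioi 0) :=
    huC2.deriv_of_isOpen isOpen_Ioi (by norm_num)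
  have huD2 : ∀ x ∈ Set.Ioi (0:ℝ), HasDerivAt (deriv u) (deriv (deriv u) x) x := fun x hx =>
    ((((huC1'.differentiableOn one_ne_zero) x hx).differentiableAt (isOpen_Ioi.mem_nhds hx))).hasDerivAt
  have hu'cont : ContinuousOn (deriv u) (Set.Ioi 0) := huC1'.continuousOn
  have hucontIoi : ContinuousOn u (Set.Ioi 0) := huC2.continuousOn
  -- bounds for a and b
  obtain ⟨Ca, hCa⟩ := haC.exists_bound_of_continuous ha2.continuous
  obtain ⟨Cb, hCb⟩ := hbC.exists_bound_of_continuous hb3.continuous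
  have hCa0 : 0 ≤ Ca := le_trans (norm_nonneg (a 0)) (hCa 0)
  set β : ℝ := 1 + δ * Cb with hβ
  have hβ1 : 1 ≤ β := by
    have h1 := hCb 0
    have h2 := norm_nonneg (b 0)
    have h3 : 0 ≤ Cb := le_trans h2 h1
    nlinarith
  have hBd : ∀ r : ℝ, 1 ≤ 1 + δ * b r ∧ 1 + δ * b r ≤ β := by
    intro r
    have h1 := hbnn r
    have h2 := hCb r
    rw [Real.norm_eq_abs] at h2
    have h3 := le_abs_self (b r)
    constructor
    · nlinarith
    · rw [hβ]; nlinarith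
  -- the potential and its integrability
  set Vd : ℝ → ℝ := fun x => V x + δ * a x with hVddef
  have hVdcont : ContinuousOn Vd (Set.Ioi 0) :=
    hVreg.continuousOn.add (continuous_const.mul ha2.continuous).continuousOn
  have hVdbound : ∀ x, |Vd x| ≤ |V x| + δ * Ca := by
    intro x
    have h1 := hCa x
    rw [Real.norm_eq_abs] at h1
    calc |Vd x| ≤ |V x| + |δ * a x| := abs_add_le _ _
    _ ≤ |V x| + δ * Ca := by
        rw [abs_mul, abs_of_nonneg hδ]
        have := abs_nonneg (a x)
        nlinarith
  set g₁ : ℝ → ℝ := fun x => |Vd x| + 2 * β with hg₁def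
  have hg₁nonneg : ∀ x, 0 ≤ g₁ x := fun x => by
    have := abs_nonneg (Vd x); simp only [hg₁def]; nlinarith
  have hg₁ge2 : ∀ x, 2 ≤ g₁ x := fun x => by
    have := abs_nonneg (Vd x); simp only [hg₁def]; nlinarith
  have hg₁cont : ContinuousOn g₁ (Set.Ioi 0) := (hVdcont.abs).add continuousOn_const
  have hVint : MeasureTheory.IntegrableOn (fun x : ℝ => |V x|) (Set.Ioc 0 1) :=
    Vabs_integrable hN hqN hVreg hVq
  have hg₁int1 : MeasureTheory.IntegrableOn g₁ (Set.Ioc 0 1) := by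
    have hconst : MeasureTheory.IntegrableOn (fun _ : ℝ => δ * Ca + 2 * β) (Set.Ioc 0 1) :=
      MeasureTheory.integrableOn_const measure_Ioc_lt_top.ne
    refine (hVint.add hconst).mono' ?_ ?_
    · exact ((hg₁cont.mono Set.Ioc_subset_Ioi_self)).aestronglyMeasurable measurableSet_Ioc
    · filter_upwards [MeasureTheory.ae_restrict_mem measurableSet_Ioc] with x _
      rw [Real.norm_eq_abs, abs_of_nonneg (hg₁nonneg x)]
      have := hVdbound x
      simp only [hg₁def, Pi.add_apply]
      linarith
  -- the primitive of g₁
  set G₁ : ℝ → ℝ := fun t => ∫ x in (0:ℝ)..t, g₁ x with hG₁def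
  set A₁ : ℝ := G₁ 1 with hA₁def
  have hA₁0 : 0 ≤ A₁ :=
    primitive_nonneg hg₁int1 (fun x _ => hg₁nonneg x) zero_le_one le_rfl
  have hG₁mono : ∀ s t : ℝ, 0 ≤ s → s ≤ t → t ≤ 1 → G₁ s ≤ G₁ t := fun s t hs hst ht =>
    primitive_mono hg₁int1 (fun x _ => hg₁nonneg x) hs hst ht
  have hG₁nonneg : ∀ t : ℝ, 0 ≤ t → t ≤ 1 → 0 ≤ G₁ t := fun t ht h1 =>
    primitive_nonneg hg₁int1 (fun x _ => hg₁nonneg x) ht h1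
  have hG₁le : ∀ t : ℝ, 0 ≤ t → t ≤ 1 → G₁ t ≤ A₁ := fun t ht h1 =>
    hG₁mono t 1 ht h1 le_rfl
  have hG₁pos : ∀ t : ℝ, 0 < t → t ≤ 1 → 0 < G₁ t := by
    intro t ht h1
    exact intervalIntegral.intervalIntegral_pos_of_pos_on
      (primitive_intervalIntegrable hg₁int1 le_rfl zero_le_one ht.le h1)
      (fun x _ => lt_of_lt_of_le two_pos (hg₁ge2 x)) ht
  have hG₁contOn : ContinuousOn G₁ (Set.Icc 0 1) := primitive_contOn hg₁int1
  -- choice of ρ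
  have hsmall : ∀ᶠ x in nhdsWithin 0 (Set.Ici 0), u x < Real.exp (-1) := by
    have h1 : Filter.Tendsto u (nhdsWithin 0 (Set.Ici 0)) (nhds 0) := by
      have := hucont 0 Set.self_mem_Ici
      rwa [ContinuousWithinAt, hu00] at this
    exact h1.eventually_lt_const (Real.exp_pos _)
  obtain ⟨η, hη, hηsub⟩ := mem_nhdsGE_iff_exists_Ico_subset.1 hsmall
  obtain ⟨ρ, hρpos, hρ1, hρη, hρA⟩ :
      ∃ ρ : ℝ, 0 < ρ ∧ ρ ≤ 1 ∧ ρ < η ∧ A₁ * ρ ≤ 1/2 := by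
    refine ⟨min (min (η/2) 1) (1/(2*(A₁+1))), ?_, ?_, ?_, ?_⟩
    · have hη0 : (0:ℝ) < η := hη
      refine lt_min (lt_min (by linarith) one_pos) (by positivity)
    · exact le_trans (min_le_left _ _) (min_le_right _ _)
    · have hη0 : (0:ℝ) < η := hη
      exact lt_of_le_of_lt (le_trans (min_le_left _ _) (min_le_left _ _)) (by linarith)
    · have h1 : min (min (η/2) 1) (1/(2*(A₁+1))) ≤ 1/(2*(A₁+1)) := min_le_right _ _
      have h2 : (0:ℝ) < A₁ + 1 := by linarith
      have h3 : A₁ * min (min (η/2) 1) (1/(2*(A₁+1))) ≤ A₁ * (1/(2*(A₁+1))) :=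
        mul_le_mul_of_nonneg_left h1 hA₁0
      have h4 : A₁ * (1/(2*(A₁+1))) ≤ 1/2 := by
        rw [mul_one_div, div_le_div_iff₀ (by positivity) two_pos]
        nlinarith
      linarith
  have hρu : ∀ x ∈ Set.Ioc (0:ℝ) ρ, u x ≤ Real.exp (-1) := fun x hx =>
    (hηsub ⟨hx.1.le, lt_of_le_of_lt hx.2 hρη⟩).le
  have hu01 : ∀ x ∈ Set.Icc (0:ℝ) ρ, 0 ≤ u x ∧ u x ≤ Real.exp (-1) := by
    intro x hx
    rcases eq_or_lt_of_le hx.1 with h | h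
    · refine ⟨le_of_eq (h ▸ hu00.symm), ?_⟩
      rw [← h, hu00]
      positivity
    · exact ⟨(hupos x h).le, hρu x ⟨h, hx.2⟩⟩
  have hg₁int : MeasureTheory.IntegrableOn g₁ (Set.Ioc 0 ρ) :=
    hg₁int1.mono_set (Set.Ioc_subset_Ioc le_rfl hρ1)
  -- the flux function and its derivative
  set φ : ℝ → ℝ := fun x =>
    x ^ (N - 1) * (Vd x * u x - (1 + δ * b x) * (u x * Real.log (u x ^ 2))) with hφdef
  have hwD : ∀ x ∈ Set.Ioi (0:ℝ), HasDerivAt (fun y => y ^ (N - 1) * deriv u y) (φ x) x := by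
    intro x hx
    have hx0 : (0:ℝ) < x := hx
    have h1 : HasDerivAt (fun y : ℝ => y ^ (N - 1)) (((N - 1 : ℕ) : ℝ) * x ^ (N - 2)) x := by
      have h := hasDerivAt_pow (N - 1) x
      have he : N - 1 - 1 = N - 2 := by omega
      rwa [he] at h
    have h2 := h1.mul (huD2 x hx)
    refine h2.congr_deriv ?_
    have hode' := hode x hx0
    simp only at hode'
    have hxne : (x:ℝ) ≠ 0 := ne_of_gt hx0
    have hpow : (x:ℝ) ^ (N - 1) = x ^ (N - 2) * x := by
      rw [← pow_succ]; congr 1; omega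
    have hcast : ((N - 1 : ℕ) : ℝ) = (N:ℝ) - 1 := by
      rw [Nat.cast_sub (by omega), Nat.cast_one]
    have hdd : deriv (deriv u) x
        = Vd x * u x - (1 + δ * b x) * (u x * Real.log (u x ^ 2)) - ((N:ℝ) - 1) / x * deriv u x := by
      simp only [hVddef]
      linarith [hode']
    simp only [hφdef]
    rw [hdd, hcast, hpow]
    field_simp
    ring
  have hlogu : ContinuousOn (fun x => Real.log (u x ^ 2)) (Set.Ioi 0) := by
    apply ContinuousOn.log (hucontIoi.pow 2)
    intro x hx
    exact pow_ne_zero _ (hupos x hx).ne'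
  have hφcont : ContinuousOn φ (Set.Ioi 0) := by
    simp only [hφdef]
    apply ContinuousOn.mul (continuous_pow (N-1)).continuousOn
    apply ContinuousOn.sub (hVdcont.mul hucontIoi)
    exact ((continuous_const.add (continuous_const.mul hb3.continuous)).continuousOn.mul
      (hucontIoi.mul hlogu))
  -- pointwise bound for φ
  have homega_u : ∀ x ∈ Set.Icc (0:ℝ) ρ, 0 ≤ u x - u x * Real.log (u x) ∧
      u x - u x * Real.log (u x) ≤ 1 := by
    intro x hx
    obtain ⟨h1, h2⟩ := hu01 x hx
    exact ⟨om_nonneg h1 (h2.trans exp_neg_one_le_one), om_le_one h1 h2⟩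
  have hφbound : ∀ x ∈ Set.Ioc (0:ℝ) ρ,
      |φ x| ≤ x ^ (N - 1) * (g₁ x * (u x - u x * Real.log (u x))) := by
    intro x hx
    have hx0 : 0 < x := hx.1
    have hux : 0 < u x := hupos x hx0
    have huxe : u x ≤ Real.exp (-1) := hρu x hx
    have hlog2 : Real.log (u x ^ 2) = 2 * Real.log (u x) := by
      rw [Real.log_pow]; push_cast; ring
    have hloguneg : Real.log (u x) ≤ -1 := by
      have h := Real.log_le_log hux huxe
      rwa [Real.log_exp] at h
    simp only [hφdef, hg₁def]
    rw [abs_mul, abs_of_nonneg (pow_nonneg hx0.le _)]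
    apply mul_le_mul_of_nonneg_left _ (pow_nonneg hx0.le _)
    rw [hlog2]
    have hB := hBd x
    have h1 : |Vd x * u x - (1 + δ * b x) * (u x * (2 * Real.log (u x)))|
        ≤ |Vd x * u x| + |(1 + δ * b x) * (u x * (2 * Real.log (u x)))| := abs_sub _ _
    have h2 : |Vd x * u x| = |Vd x| * u x := by
      rw [abs_mul, abs_of_pos hux]
    have h3 : |(1 + δ * b x) * (u x * (2 * Real.log (u x)))|
        = (1 + δ * b x) * (u x * (2 * (- Real.log (u x)))) := by
      rw [abs_mul, abs_of_pos (lt_of_lt_of_le one_pos hB.1), abs_mul, abs_of_pos hux,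
        abs_mul, abs_of_nonneg (by norm_num : (0:ℝ) ≤ 2), abs_of_neg (by linarith : Real.log (u x) < 0)]
    rw [h2, h3] at h1
    have h4 : 0 ≤ -Real.log (u x) := by linarith
    have h5 : 0 ≤ |Vd x| := abs_nonneg _
    nlinarith [mul_nonneg hux.le h4, mul_nonneg (mul_nonneg hux.le h4) (by linarith : 0 ≤ β - (1 + δ * b x)),
      mul_nonneg (mul_nonneg h5 hux.le) h4]
  have hφ_le_g₁ : ∀ x ∈ Set.Icc (0:ℝ) ρ, |φ x| ≤ g₁ x := by
    intro x hx
    rcases eq_or_lt_of_le hx.1 with h | h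
    · have : φ 0 = 0 := by
        simp only [hφdef]
        rw [zero_pow (by omega : N - 1 ≠ 0), zero_mul]
      rw [← h, this, abs_zero]
      exact hg₁nonneg 0
    · have h1 := hφbound x ⟨h, hx.2⟩
      have h2 := homega_u x hx
      have h3 : x ^ (N - 1) ≤ 1 := by
        apply pow_le_one₀ (le_of_lt h) (hx.2.trans hρ1)
      have h4 := hg₁nonneg x
      nlinarith [mul_nonneg h4 h2.1]
  have hφint : MeasureTheory.IntegrableOn φ (Set.Ioc 0 ρ) := by
    refine (hg₁int.mono' ?_ ?_)
    · exact ((hφcont.mono (fun x hx => hx.1)).aestronglyMeasurable measurableSet_Ioc)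
    · filter_upwards [MeasureTheory.ae_restrict_mem measurableSet_Ioc] with x hx
      rw [Real.norm_eq_abs]
      exact hφ_le_g₁ x ⟨hx.1.le, hx.2⟩
  -- FTC for the flux
  have hwsub : ∀ s t : ℝ, 0 < s → s ≤ t → t ≤ ρ →
      t ^ (N - 1) * deriv u t - s ^ (N - 1) * deriv u s = ∫ x in s..t, φ x := by
    intro s t hs hst htρ
    have hsub : Set.uIcc s t ⊆ Set.Ioi (0:ℝ) := by
      rw [Set.uIcc_of_le hst]
      intro x hx
      exact lt_of_lt_of_le hs hx.1
    have hint : IntervalIntegrable φ MeasureTheory.volume s t :=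
      (hφcont.mono hsub).intervalIntegrable
    exact (intervalIntegral.integral_eq_sub_of_hasDerivAt (fun x hx => hwD x (hsub hx)) hint).symm
  set W : ℝ → ℝ := fun t => ∫ x in (0:ℝ)..t, φ x with hWdef
  have hWsub : ∀ s t : ℝ, 0 ≤ s → s ≤ t → t ≤ ρ → W t - W s = ∫ x in s..t, φ x := by
    intro s t hs hst htρ
    exact intervalIntegral.integral_interval_sub_left
      (primitive_intervalIntegrable hφint le_rfl hρpos.le (hs.trans hst) htρ)
      (primitive_intervalIntegrable hφint le_rfl hρpos.le hs (hst.trans htρ))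
  have hconst : ∀ s ∈ Set.Ioc (0:ℝ) ρ,
      s ^ (N - 1) * deriv u s - W s = ρ ^ (N - 1) * deriv u ρ - W ρ := by
    intro s hs
    have h1 := hwsub s ρ hs.1 hs.2 le_rfl
    have h2 := hWsub s ρ hs.1.le hs.2 le_rfl
    linarith
  have hWbound : ∀ t ∈ Set.Icc (0:ℝ) ρ, |W t| ≤ G₁ t := by
    intro t ht
    have hII : IntervalIntegrable φ MeasureTheory.volume 0 t :=
      primitive_intervalIntegrable hφint le_rfl hρpos.le ht.1 ht.2
    calc |W t| ≤ ∫ x in (0:ℝ)..t, |φ x| :=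
          intervalIntegral.abs_integral_le_integral_abs ht.1
    _ ≤ ∫ x in (0:ℝ)..t, g₁ x := by
          apply intervalIntegral.integral_mono_on ht.1 hII.abs
            (primitive_intervalIntegrable hg₁int le_rfl hρpos.le ht.1 ht.2)
          intro x hx
          exact hφ_le_g₁ x ⟨hx.1, hx.2.trans ht.2⟩
    _ = G₁ t := rfl
  have hG₁to0 : Filter.Tendsto G₁ (nhdsWithin 0 (Set.Ioi 0)) (nhds 0) := by
    have h0 : G₁ 0 = 0 := intervalIntegral.integral_same
    have h1 : ContinuousWithinAt G₁ (Set.Icc 0 1) 0 :=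
      hG₁contOn 0 (Set.left_mem_Icc.2 zero_le_one)
    have h2 : Filter.Tendsto G₁ (nhdsWithin 0 (Set.Icc 0 1)) (nhds 0) := by
      rw [ContinuousWithinAt, h0] at h1
      exact h1
    have h3 : Filter.Tendsto G₁ (nhdsWithin 0 (Set.Ioc 0 ρ)) (nhds 0) :=
      h2.mono_left (nhdsWithin_mono _ (fun x hx => ⟨hx.1.le, hx.2.trans hρ1⟩))
    rwa [nhdsWithin_Ioc_eq_nhdsGT hρpos] at h3
  have hWto0 : Filter.Tendsto W (nhdsWithin 0 (Set.Ioi 0)) (nhds 0) := by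
    apply squeeze_zero_norm' _ hG₁to0
    filter_upwards [Ioc_mem_nhdsGT hρpos] with x hx
    rw [Real.norm_eq_abs]
    exact hWbound x ⟨hx.1.le, hx.2⟩
  -- the constant c is zero
  have hc0 : ρ ^ (N - 1) * deriv u ρ - W ρ = 0 := by
    refine flux_limit_zero hN hρpos hρ1 hupos hρu huD hu'cont ?_ hWto0
    intro s hs
    exact hconst s hs
    -- the integrand g₁ · ω(u) and its primitive Pf
  have hωu_cont : ContinuousOn (fun x => g₁ x * (u x - u x * Real.log (u x))) (Set.Ioi 0) := by
    apply hg₁cont.mul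
    exact (continuous_id.sub Real.continuous_mul_log).comp_continuousOn hucontIoi
  have hωu_int : MeasureTheory.IntegrableOn
      (fun x => g₁ x * (u x - u x * Real.log (u x))) (Set.Ioc 0 ρ) := by
    refine hg₁int.mono'
      ((hωu_cont.mono (fun x hx => hx.1)).aestronglyMeasurable measurableSet_Ioc) ?_
    filter_upwards [MeasureTheory.ae_restrict_mem measurableSet_Ioc] with x hx
    have h1 := homega_u x ⟨hx.1.le, hx.2⟩
    rw [Real.norm_eq_abs, abs_mul, abs_of_nonneg (hg₁nonneg x), abs_of_nonneg h1.1]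
    have h2 := mul_le_mul_of_nonneg_left h1.2 (hg₁nonneg x)
    linarith
  have hωu_nonneg : ∀ x ∈ Set.Icc (0:ℝ) ρ, 0 ≤ g₁ x * (u x - u x * Real.log (u x)) :=
    fun x hx => mul_nonneg (hg₁nonneg x) (homega_u x hx).1
  set Pf : ℝ → ℝ := fun t => ∫ x in (0:ℝ)..t, g₁ x * (u x - u x * Real.log (u x)) with hPdef
  have hPcont : ContinuousOn Pf (Set.Icc 0 ρ) := primitive_contOn hωu_int
  have hPnonneg : ∀ t ∈ Set.Icc (0:ℝ) ρ, 0 ≤ Pf t := fun t ht =>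
    primitive_nonneg hωu_int hωu_nonneg ht.1 ht.2
  have hPpos : ∀ t ∈ Set.Ioc (0:ℝ) ρ, 0 < Pf t := by
    intro t ht
    apply intervalIntegral.intervalIntegral_pos_of_pos_on
      (primitive_intervalIntegrable hωu_int le_rfl hρpos.le ht.1.le ht.2) _ ht.1
    intro x hx
    have hx' : x ∈ Set.Ioc (0:ℝ) ρ := ⟨hx.1, hx.2.le.trans ht.2⟩
    have h1 := hupos x hx.1
    have h2 : u x ≤ 1 := (hρu x hx').trans exp_neg_one_le_one
    exact mul_pos (lt_of_lt_of_le two_pos (hg₁ge2 x)) (om_pos h1 h2)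
  -- derivative bound |deriv u| ≤ Pf
  have hderiv_le : ∀ t ∈ Set.Ioc (0:ℝ) ρ, |deriv u t| ≤ Pf t := by
    intro t ht
    have hWt : t ^ (N - 1) * deriv u t = W t := by
      have h := hconst t ht
      linarith [hc0]
    have htp : 0 < t ^ (N - 1) := pow_pos ht.1 _
    have h2 : |W t| ≤ t ^ (N - 1) * Pf t := by
      have hII : IntervalIntegrable φ MeasureTheory.volume 0 t :=
        primitive_intervalIntegrable hφint le_rfl hρpos.le ht.1.le ht.2
      calc |W t| ≤ ∫ x in (0:ℝ)..t, |φ x| :=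
            intervalIntegral.abs_integral_le_integral_abs ht.1.le
      _ ≤ ∫ x in (0:ℝ)..t, t ^ (N - 1) * (g₁ x * (u x - u x * Real.log (u x))) := by
            apply intervalIntegral.integral_mono_on ht.1.le hII.abs
              ((primitive_intervalIntegrable hωu_int le_rfl hρpos.le ht.1.le ht.2).const_mul _)
            intro x hx
            rcases eq_or_lt_of_le hx.1 with h | h
            · have hφ0 : φ 0 = 0 := by
                simp only [hφdef]
                rw [zero_pow (by omega : N - 1 ≠ 0), zero_mul]
              rw [← h, hφ0, abs_zero]
              exact mul_nonneg (pow_nonneg ht.1.le _) (hωu_nonneg 0 ⟨le_rfl, hρpos.le⟩)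
            · have h1 := hφbound x ⟨h, hx.2.trans ht.2⟩
              have h3 : x ^ (N - 1) ≤ t ^ (N - 1) := pow_le_pow_left₀ hx.1 hx.2 _
              have h4 := hωu_nonneg x ⟨hx.1, hx.2.trans ht.2⟩
              nlinarith
      _ = t ^ (N - 1) * Pf t := intervalIntegral.integral_const_mul _ _
    have h5 : |deriv u t| = |W t| / t ^ (N - 1) := by
      rw [← hWt, abs_mul, abs_of_pos htp, mul_div_cancel_left₀ _ (ne_of_gt htp)]
    rw [h5, div_le_iff₀ htp]
    linarith
  -- u ≤ Tf
  have hPint : MeasureTheory.IntegrableOn Pf (Set.Ioc 0 ρ) :=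
    (hPcont.integrableOn_Icc).mono_set Set.Ioc_subset_Icc_self
  set Tf : ℝ → ℝ := fun t => ∫ x in (0:ℝ)..t, Pf x with hTdef
  have hTcont : ContinuousOn Tf (Set.Icc 0 ρ) := primitive_contOn hPint
  have hTnonneg : ∀ t ∈ Set.Icc (0:ℝ) ρ, 0 ≤ Tf t := fun t ht =>
    primitive_nonneg hPint hPnonneg ht.1 ht.2
  have hTmono : ∀ s t : ℝ, 0 ≤ s → s ≤ t → t ≤ ρ → Tf s ≤ Tf t := fun s t hs hst ht =>
    primitive_mono hPint hPnonneg hs hst ht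
  have hTpos : ∀ t ∈ Set.Ioc (0:ℝ) ρ, 0 < Tf t := by
    intro t ht
    apply intervalIntegral.intervalIntegral_pos_of_pos_on
      (primitive_intervalIntegrable hPint le_rfl hρpos.le ht.1.le ht.2) _ ht.1
    intro x hx
    exact hPpos x ⟨hx.1, hx.2.le.trans ht.2⟩
  have hu_le_T : ∀ r ∈ Set.Ioc (0:ℝ) ρ, u r ≤ Tf r := by
    intro r hr
    have key : ∀ ε ∈ Set.Ioo (0:ℝ) r, u r ≤ Tf r + u ε := by
      intro ε hε
      have hεmem : ε ∈ Set.Ioc (0:ℝ) ρ := ⟨hε.1, hε.2.le.trans hr.2⟩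
      have hsub : Set.uIcc ε r ⊆ Set.Ioi (0:ℝ) := by
        rw [Set.uIcc_of_le hε.2.le]
        intro x hx
        exact lt_of_lt_of_le hε.1 hx.1
      have hFTC : u r - u ε = ∫ x in ε..r, deriv u x :=
        (intervalIntegral.integral_eq_sub_of_hasDerivAt
          (fun x hx => huD x (hsub hx)) ((hu'cont.mono hsub).intervalIntegrable)).symm
      have h1 : ∫ x in ε..r, deriv u x ≤ ∫ x in ε..r, Pf x := by
        apply intervalIntegral.integral_mono_on hε.2.le
          ((hu'cont.mono hsub).intervalIntegrable)
          (primitive_intervalIntegrable hPint hε.1.le hεmem.2 hr.1.le hr.2)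
        intro x hx
        have hx' : x ∈ Set.Ioc (0:ℝ) ρ := ⟨lt_of_lt_of_le hε.1 hx.1, hx.2.trans hr.2⟩
        exact le_trans (le_abs_self _) (hderiv_le x hx')
      have h2 : Tf r - Tf ε = ∫ x in ε..r, Pf x :=
        intervalIntegral.integral_interval_sub_left
          (primitive_intervalIntegrable hPint le_rfl hρpos.le hr.1.le hr.2)
          (primitive_intervalIntegrable hPint le_rfl hρpos.le hε.1.le hεmem.2)
      have h3 := hTnonneg ε ⟨hε.1.le, hεmem.2⟩
      linarith
    have hto : Filter.Tendsto (fun ε => Tf r + u ε) (nhdsWithin 0 (Set.Ioi 0))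
        (nhds (Tf r + 0)) := by
      apply Filter.Tendsto.add tendsto_const_nhds
      have h1 : Filter.Tendsto u (nhdsWithin 0 (Set.Ici 0)) (nhds 0) := by
        have h := hucont 0 Set.self_mem_Ici
        rwa [ContinuousWithinAt, hu00] at h
      exact h1.mono_left (nhdsWithin_mono _ Set.Ioi_subset_Ici_self)
    rw [add_zero] at hto
    apply ge_of_tendsto hto
    filter_upwards [Ioo_mem_nhdsGT hr.1] with ε hε
    exact key ε hε
  -- Mf and Rf
  set Mf : ℝ → ℝ := fun t => min (Tf t) (Real.exp (-1)) with hMdef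
  have hMcont : ContinuousOn Mf (Set.Icc 0 ρ) := hTcont.inf continuousOn_const
  have hMpos : ∀ t ∈ Set.Ioc (0:ℝ) ρ, 0 < Mf t := fun t ht =>
    lt_min (hTpos t ht) (Real.exp_pos _)
  have hMle : ∀ t : ℝ, Mf t ≤ Real.exp (-1) := fun t => min_le_right _ _
  have hMnonneg : ∀ t ∈ Set.Icc (0:ℝ) ρ, 0 ≤ Mf t := fun t ht =>
    le_min (hTnonneg t ht) (Real.exp_pos _).le
  have hu_le_M : ∀ x t : ℝ, 0 < x → x ≤ t → t ≤ ρ → u x ≤ Mf t := by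
    intro x t hx hxt htρ
    exact le_min (le_trans (hu_le_T x ⟨hx, hxt.trans htρ⟩) (hTmono x t hx.le hxt htρ))
      (hρu x ⟨hx, hxt.trans htρ⟩)
  have hP_le : ∀ t ∈ Set.Icc (0:ℝ) ρ, Pf t ≤ G₁ t * (Mf t - Mf t * Real.log (Mf t)) := by
    intro t ht
    rcases eq_or_lt_of_le ht.1 with h | h
    · have hP0 : Pf 0 = 0 := intervalIntegral.integral_same
      rw [← h, hP0]
      exact mul_nonneg (hG₁nonneg 0 le_rfl zero_le_one)
        (om_nonneg (hMnonneg 0 ⟨le_rfl, hρpos.le⟩) ((hMle 0).trans exp_neg_one_le_one))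
    · have hMt1 : Mf t ≤ 1 := (hMle t).trans exp_neg_one_le_one
      have hωMt_nonneg : 0 ≤ Mf t - Mf t * Real.log (Mf t) := om_nonneg (hMnonneg t ht) hMt1
      calc Pf t ≤ ∫ x in (0:ℝ)..t, g₁ x * (Mf t - Mf t * Real.log (Mf t)) := by
            apply intervalIntegral.integral_mono_on ht.1
              (primitive_intervalIntegrable hωu_int le_rfl hρpos.le ht.1 ht.2)
              ((primitive_intervalIntegrable hg₁int le_rfl hρpos.le ht.1 ht.2).mul_const _)
            intro x hx
            rcases eq_or_lt_of_le hx.1 with hh | hh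
            · have hω0 : u 0 - u 0 * Real.log (u 0) = 0 := by rw [hu00]; simp
              rw [← hh, hω0, mul_zero]
              exact mul_nonneg (hg₁nonneg 0) hωMt_nonneg
            · apply mul_le_mul_of_nonneg_left _ (hg₁nonneg x)
              exact om_mono (hupos x hh).le (hu_le_M x t hh hx.2 ht.2) hMt1
      _ = G₁ t * (Mf t - Mf t * Real.log (Mf t)) := by
            rw [intervalIntegral.integral_mul_const]
  set Rf : ℝ → ℝ := fun t => ∫ x in (0:ℝ)..t, G₁ x * (Mf x - Mf x * Real.log (Mf x)) with hRdef
  have hRintegrand_cont : ContinuousOn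
      (fun x => G₁ x * (Mf x - Mf x * Real.log (Mf x))) (Set.Icc 0 ρ) := by
    apply ContinuousOn.mul
      (hG₁contOn.mono (fun x (hx : x ∈ Set.Icc (0:ℝ) ρ) => ⟨hx.1, hx.2.trans hρ1⟩))
    exact (continuous_id.sub Real.continuous_mul_log).comp_continuousOn hMcont
  have hRint : MeasureTheory.IntegrableOn
      (fun x => G₁ x * (Mf x - Mf x * Real.log (Mf x))) (Set.Ioc 0 ρ) :=
    (hRintegrand_cont.integrableOn_Icc).mono_set Set.Ioc_subset_Icc_self
  have hRcont : ContinuousOn Rf (Set.Icc 0 ρ) := primitive_contOn hRint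
  have hT_le_R : ∀ t ∈ Set.Icc (0:ℝ) ρ, Tf t ≤ Rf t := by
    intro t ht
    apply intervalIntegral.integral_mono_on ht.1
      (primitive_intervalIntegrable hPint le_rfl hρpos.le ht.1 ht.2)
      (primitive_intervalIntegrable hRint le_rfl hρpos.le ht.1 ht.2)
    intro x hx
    exact hP_le x ⟨hx.1, hx.2.trans ht.2⟩
  have hRpos : ∀ t ∈ Set.Ioc (0:ℝ) ρ, 0 < Rf t := by
    intro t ht
    apply intervalIntegral.intervalIntegral_pos_of_pos_on
      (primitive_intervalIntegrable hRint le_rfl hρpos.le ht.1.le ht.2) _ ht.1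
    intro x hx
    have hx' : x ∈ Set.Ioc (0:ℝ) ρ := ⟨hx.1, hx.2.le.trans ht.2⟩
    exact mul_pos (hG₁pos x hx.1 (hx'.2.trans hρ1))
      (om_pos (hMpos x hx') ((hMle x).trans exp_neg_one_le_one))
  have hR_le_A : ∀ t ∈ Set.Icc (0:ℝ) ρ, Rf t ≤ A₁ * t := by
    intro t ht
    have hstep : Rf t ≤ ∫ _x in (0:ℝ)..t, A₁ := by
      apply intervalIntegral.integral_mono_on ht.1
        (primitive_intervalIntegrable hRint le_rfl hρpos.le ht.1 ht.2)
        intervalIntegrable_const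
      intro x hx
      have hxmem : x ∈ Set.Icc (0:ℝ) ρ := ⟨hx.1, hx.2.trans ht.2⟩
      have h1 := hG₁le x hx.1 (hxmem.2.trans hρ1)
      have h2 : Mf x - Mf x * Real.log (Mf x) ≤ 1 := om_le_one (hMnonneg x hxmem) (hMle x)
      have h3 := hG₁nonneg x hx.1 (hxmem.2.trans hρ1)
      have h4 := om_nonneg (hMnonneg x hxmem) ((hMle x).trans exp_neg_one_le_one)
      nlinarith
    have heq : (∫ _x in (0:ℝ)..t, A₁) = A₁ * t := by
      rw [intervalIntegral.integral_const, smul_eq_mul, sub_zero, mul_comm]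
    linarith
  -- Kf
  set Kf : ℝ → ℝ := fun t => ∫ x in (0:ℝ)..t, G₁ x with hKdef
  have hG₁intρ : MeasureTheory.IntegrableOn G₁ (Set.Ioc 0 ρ) :=
    (((hG₁contOn.mono (fun x (hx : x ∈ Set.Icc (0:ℝ) ρ) =>
      ⟨hx.1, hx.2.trans hρ1⟩)).integrableOn_Icc)).mono_set Set.Ioc_subset_Icc_self
  have hKcont : ContinuousOn Kf (Set.Icc 0 ρ) := primitive_contOn hG₁intρ
  have hKnonneg : ∀ t ∈ Set.Icc (0:ℝ) ρ, 0 ≤ Kf t := fun t ht =>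
    primitive_nonneg hG₁intρ (fun x hx => hG₁nonneg x hx.1 (hx.2.trans hρ1)) ht.1 ht.2
  -- derivatives of Rf and Kf
  have hG₁contIoo : ContinuousOn G₁ (Set.Ioo 0 ρ) :=
    hG₁contOn.mono (fun x (hx : x ∈ Set.Ioo (0:ℝ) ρ) => ⟨hx.1.le, hx.2.le.trans hρ1⟩)
  have hKD : ∀ x ∈ Set.Ioo (0:ℝ) ρ, HasDerivAt Kf (G₁ x) x := by
    intro x hx
    exact intervalIntegral.integral_hasDerivAt_right
      (primitive_intervalIntegrable hG₁intρ le_rfl hρpos.le hx.1.le hx.2.le)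
      (hG₁contIoo.stronglyMeasurableAtFilter isOpen_Ioo x hx)
      (hG₁contIoo.continuousAt (isOpen_Ioo.mem_nhds hx))
  have hRintegrand_contIoo : ContinuousOn
      (fun x => G₁ x * (Mf x - Mf x * Real.log (Mf x))) (Set.Ioo 0 ρ) :=
    hRintegrand_cont.mono (fun x (hx : x ∈ Set.Ioo (0:ℝ) ρ) => ⟨hx.1.le, hx.2.le⟩)
  have hRD : ∀ x ∈ Set.Ioo (0:ℝ) ρ,
      HasDerivAt Rf (G₁ x * (Mf x - Mf x * Real.log (Mf x))) x := by
    intro x hx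
    exact intervalIntegral.integral_hasDerivAt_right
      (primitive_intervalIntegrable hRint le_rfl hρpos.le hx.1.le hx.2.le)
      (hRintegrand_contIoo.stronglyMeasurableAtFilter isOpen_Ioo x hx)
      (hRintegrand_contIoo.continuousAt (isOpen_Ioo.mem_nhds hx))
  -- conclude
  exact osgood_false hρpos hA₁0 hρA hRcont hKcont hRD hKD
    (fun x hx => hG₁nonneg x hx.1.le (hx.2.le.trans hρ1))
    hRpos hR_le_A
    (fun x hx => hMnonneg x ⟨hx.1.le, hx.2.le⟩)
    (fun x hx => le_trans (min_le_left _ _)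
      (hT_le_R x ⟨hx.1.le, hx.2.le⟩))
    hKnonneg
end
end

section
/- Let u be a solution of problem (P3). Then for every τ ∈ (0, 1/2), u(r)·e^{τ r²} → 0 as r → ∞. -/
open Real Filter Set MeasureTheory

noncomputable section

lemma ulog_ineq {U W : ℝ} (hW : 0 < W) (hU : 0 < U) :
    U * Real.log (U ^ 2) - W * Real.log (W ^ 2) ≤ (Real.log (U ^ 2) + 2) * (U - W) := by
  have h : Real.log (U / W) ≤ U / W - 1 := Real.log_le_sub_one_of_pos (div_pos hU hW)
  rw [Real.log_div hU.ne' hW.ne'] at h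
  have h2 : W * Real.log U - W * Real.log W ≤ U - W := by
    have h3 := mul_le_mul_of_nonneg_left h hW.le
    have h4 : W * (U / W - 1) = U - W := by field_simp
    calc W * Real.log U - W * Real.log W = W * (Real.log U - Real.log W) := by ring
      _ ≤ W * (U / W - 1) := h3
      _ = U - W := h4
  have hlU : Real.log (U ^ 2) = 2 * Real.log U := by
    rw [Real.log_pow]; norm_num
  have hlW : Real.log (W ^ 2) = 2 * Real.log W := by
    rw [Real.log_pow]; norm_num
  rw [hlU, hlW]
  nlinarith [h2]

lemma grow {f : ℝ → ℝ} {A C : ℝ} (m : ℕ) (hC : 0 < C)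
    (hdiff : ∀ r, A ≤ r → DifferentiableAt ℝ f r)
    (hd : ∀ r, A ≤ r → C * r ^ m ≤ deriv f r) :
    ∃ C' : ℝ, 0 < C' ∧ ∃ B : ℝ, A ≤ B ∧ ∀ r, B ≤ r → C' * r ^ (m + 1) ≤ f r := by
  have hm1 : (0:ℝ) < (m:ℝ) + 1 := by positivity
  set c : ℝ := C / ((m:ℝ) + 1) with hcdef
  have hc0 : 0 < c := by positivity
  have hpd : ∀ r : ℝ, HasDerivAt (fun x : ℝ => c * x ^ (m+1)) (C * r ^ m) r := by
    intro r
    have h1 := (hasDerivAt_pow (m+1) r).const_mul c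
    have h2 : c * (((m:ℕ)+1 : ℕ) * r ^ ((m+1) - 1)) = C * r ^ m := by
      push_cast
      field_simp [hcdef]
      have hc' : c * ((m:ℝ)+1) = C := by rw [hcdef]; exact div_mul_cancel₀ C hm1.ne'
      linear_combination (r ^ m) * hc'
    rw [h2] at h1
    exact h1
  set φ : ℝ → ℝ := fun r => f r - c * r ^ (m + 1) with hφ
  have hmono : MonotoneOn φ (Ici A) := by
    apply monotoneOn_of_deriv_nonneg (convex_Ici A)
    · exact fun r hr =>
        (((hdiff r hr).sub ((hpd r).differentiableAt)).continuousAt).continuousWithinAt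
    · intro r hr
      rw [interior_Ici] at hr
      exact ((hdiff r hr.le).sub ((hpd r).differentiableAt)).differentiableWithinAt
    · intro r hr
      rw [interior_Ici] at hr
      have hder : deriv φ r = deriv f r - C * r ^ m := by
        rw [hφ]
        rw [deriv_fun_sub (hdiff r hr.le) ((hpd r).differentiableAt), (hpd r).deriv]
      rw [hder]
      have := hd r hr.le
      linarith
  set C' : ℝ := c / 2 with hC'def
  have hC' : 0 < C' := by positivity
  have htend : Tendsto (fun r : ℝ => C' * r ^ (m+1)) atTop atTop :=
    (tendsto_pow_atTop (Nat.succ_ne_zero m)).const_mul_atTop hC'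
  obtain ⟨B0, hB0⟩ := eventually_atTop.1 (htend.eventually_ge_atTop (c * A ^ (m+1) - f A))
  refine ⟨C', hC', max A B0, le_max_left _ _, ?_⟩
  intro r hr
  have hAr : A ≤ r := le_trans (le_max_left _ _) hr
  have h1 : φ A ≤ φ r := hmono self_mem_Ici hAr hAr
  have h2 : c * A ^ (m+1) - f A ≤ C' * r ^ (m+1) := hB0 r (le_trans (le_max_right _ _) hr)
  have hcc : c = 2 * C' := by rw [hC'def]; ring
  simp only [hφ] at h1
  rw [hcc] at h1 h2
  linarith

lemma aa_pos {t : ℝ} (h0 : 0 < t) (h : t < 1/2) : 0 < 2*t - 4*t^2 := by nlinarith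

lemma key_quad {A t ρ : ℝ} (hA : 0 < A) : 0 ≤ A*ρ^2 - t*ρ + t^2/(4*A) := by
  have h1 : A*ρ^2 - t*ρ + t^2/(4*A) = (2*A*ρ - t)^2/(4*A) := by
    field_simp
    ring
  rw [h1]
  positivity

lemma theta_log_lb {θ L ρ : ℝ} (hL0 : 0 ≤ L) (hLρ : L ≤ ρ) : -(|θ| * ρ) ≤ θ * L := by
  nlinarith [mul_nonneg (by linarith [neg_abs_le θ] : (0:ℝ) ≤ θ + |θ|) hL0,
    mul_nonneg (abs_nonneg θ) (by linarith : 0 ≤ ρ - L)]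

lemma max_contra {Vr U W : ℝ} (hW : 0 < W) (hU : 0 < U) (hUW : W < U)
    (h3 : (Vr - Real.log (U^2)) * U ≤ (Vr - Real.log (W^2)) * W) :
    Vr ≤ Real.log (U^2) + 2 := by
  have h5 := ulog_ineq hW hU
  have h1 : Vr * (U - W) ≤ (Real.log (U^2) + 2) * (U - W) := by nlinarith
  exact le_of_mul_le_mul_right h1 (by linarith)

lemma exp_quad_bound {τ τ' R r : ℝ} (hτ0 : 0 < τ) (hR0 : 0 < R) (hr0 : 0 < r)
    (h2' : 2*τ*R + 1 ≤ (τ - τ')*r) : -(τ * (r - R)^2) + τ' * r^2 ≤ -r := by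
  nlinarith [mul_le_mul_of_nonneg_right h2' hr0.le, sq_nonneg R,
    mul_pos hτ0 (mul_pos hR0 hR0)]

lemma nonpos_helper {c x : ℝ} (hc : 0 ≤ c) (hx : 0 ≤ x) : c * (-x) ≤ 0 := by
  have := mul_nonneg hc hx
  linarith [this]

set_option maxHeartbeats 1000000 in
/-- Let `u` be a solution of problem (P3). Then for every `τ ∈ (0, 1/2)`,
`u(r) e^{τ r²} → 0` as `r → ∞`. -/
theorem sol_P3_gaussian_decay (N : ℕ) (hN : 2 ≤ N) (V a b : ℝ → ℝ) (δ θ : ℝ)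
    (hV1 : CondV1 N V) (hVab : CondVab a b) (hδ : 0 ≤ δ) (hθ : MemTheta N V θ)
    (u : ℝ → ℝ)
    (hu : SolP3 N (fun r => V r + δ * a r) (fun r => 1 + δ * b r) θ u) :
    ∀ τ : ℝ, 0 < τ → τ < 1 / 2 →
      Filter.Tendsto (fun r : ℝ => u r * Real.exp (τ * r ^ 2)) Filter.atTop (nhds 0) := by
  obtain ⟨hucont, huC2, hode, hupos, -, hdecay⟩ := hu
  obtain ⟨-, hacs, -, hbcs, -, -⟩ := hVab
  obtain ⟨-, M, hM⟩ := hθ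
  intro τ' hτ'0 hτ'half
  -- differentiability facts
  have hdiffu : ∀ r : ℝ, 0 < r → DifferentiableAt ℝ u r := fun r hr =>
    (huC2.differentiableOn two_ne_zero).differentiableAt (isOpen_Ioi.mem_nhds hr)
  have hC1 : ContDiffOn ℝ 1 (deriv u) (Ioi 0) :=
    huC2.deriv_of_isOpen isOpen_Ioi (by norm_num)
  have hdiffdu : ∀ r : ℝ, 0 < r → DifferentiableAt ℝ (deriv u) r := fun r hr =>
    (hC1.differentiableOn one_ne_zero).differentiableAt (isOpen_Ioi.mem_nhds hr)
  -- support radii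
  obtain ⟨sa, hsa⟩ := hacs.isBounded.subset_closedBall 0
  obtain ⟨sb, hsb⟩ := hbcs.isBounded.subset_closedBall 0
  have hab : ∀ r : ℝ, 0 < r → max sa sb < r → a r = 0 ∧ b r = 0 := by
    intro r hr0 hr
    constructor
    · apply image_eq_zero_of_notMem_tsupport
      intro hmem
      have := hsa hmem
      rw [Metric.mem_closedBall, Real.dist_eq, sub_zero, abs_of_pos hr0] at this
      have : sa < r := lt_of_le_of_lt (le_max_left _ _) hr
      linarith [hsa hmem, (Metric.mem_closedBall.1 (hsa hmem))]
    · apply image_eq_zero_of_notMem_tsupport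
      intro hmem
      have h1 := Metric.mem_closedBall.1 (hsb hmem)
      rw [Real.dist_eq, sub_zero, abs_of_pos hr0] at h1
      have : sb < r := lt_of_le_of_lt (le_max_right _ _) hr
      linarith
  -- decay bounds
  have hdec : ∀ ε : ℝ, 0 < ε → ∀ᶠ r in atTop, 0 < u r ∧ u r ≤ ε * r ^ (θ/2) := by
    intro ε hε
    filter_upwards [hdecay.eventually_lt_const hε, eventually_ge_atTop (1:ℝ)] with r h1 hr1
    have hr0 : (0:ℝ) < r := lt_of_lt_of_le one_pos hr1
    refine ⟨hupos r hr0, ?_⟩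
    have hrp : (0:ℝ) < r ^ (θ/2) := Real.rpow_pos_of_pos hr0 _
    have key : r ^ (θ/2) * (r ^ (-(θ/2)) * u r) = u r := by
      rw [← mul_assoc, ← Real.rpow_add hr0]
      simp
    calc u r = r ^ (θ/2) * (r ^ (-(θ/2)) * u r) := key.symm
      _ ≤ r ^ (θ/2) * ε := mul_le_mul_of_nonneg_left h1.le hrp.le
      _ = ε * r ^ (θ/2) := mul_comm _ _
  have hlog : ∀ ε : ℝ, 0 < ε → ∀ᶠ r in atTop,
      Real.log (u r ^ 2) ≤ 2 * Real.log ε + θ * Real.log r := by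
    intro ε hε
    filter_upwards [hdec ε hε, eventually_ge_atTop (1:ℝ)] with r hr hr1
    obtain ⟨hu0, hub⟩ := hr
    have hr0 : (0:ℝ) < r := by linarith
    have h1 : Real.log (u r) ≤ Real.log (ε * r ^ (θ/2)) := Real.log_le_log hu0 hub
    rw [Real.log_mul hε.ne' (by positivity), Real.log_rpow hr0] at h1
    have h2 : Real.log (u r ^ 2) = 2 * Real.log (u r) := by rw [Real.log_pow]; norm_num
    rw [h2]
    linarith
  -- frequently small values of u
  have hfreq : ∀ v : ℝ, 0 < v → ∀ T : ℝ, ∃ r : ℝ, T ≤ r ∧ u r < v := by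
    by_contra hcon
    push_neg at hcon
    obtain ⟨v, hv, T, hT⟩ := hcon
    have hc1 : ∀ᶠ r in atTop, (1:ℝ) ≤ V r - Real.log (u r ^ 2) := by
      have hε : (0:ℝ) < Real.exp ((M - 1)/2) := Real.exp_pos _
      filter_upwards [hlog _ hε, hM] with r h1 h2
      rw [Real.log_exp] at h1
      linarith
    have hev : ∀ᶠ r in atTop, ((1:ℝ) ≤ V r - Real.log (u r ^ 2)) ∧ (1:ℝ) ≤ r ∧ T ≤ r
        ∧ (a r = 0 ∧ b r = 0) := by
      filter_upwards [hc1, eventually_ge_atTop (1:ℝ), eventually_ge_atTop T,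
        eventually_gt_atTop (max sa sb), eventually_gt_atTop (0:ℝ)] with r h1 h2 h3 h4 h5
      exact ⟨h1, h2, h3, hab r h5 h4⟩
    obtain ⟨T0, hT0⟩ := eventually_atTop.1 hev
    have hode' : ∀ r, T0 ≤ r → deriv (deriv u) r + ((N:ℝ)-1)/r * deriv u r
        = (V r - Real.log (u r ^ 2)) * u r := by
      intro r hr
      obtain ⟨hc, hr1, hrT, hra, hrb⟩ := hT0 r hr
      have hr0 : (0:ℝ) < r := by linarith
      have h0 := hode r hr0
      simp only [hra, hrb, mul_zero, add_zero] at h0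
      linear_combination h0
    set n := N - 1 with hn
    have hn1 : 1 ≤ n := by omega
    have hcast : ((n:ℕ):ℝ) = (N:ℝ) - 1 := by
      rw [hn]
      push_cast [Nat.cast_sub (by omega : 1 ≤ N)]
      ring
    set F : ℝ → ℝ := fun r => r ^ n * deriv u r with hF
    have hFder : ∀ r, T0 ≤ r → HasDerivAt F (r ^ n * ((V r - Real.log (u r ^ 2)) * u r)) r := by
      intro r hr
      obtain ⟨hc, hr1, hrT, hrab⟩ := hT0 r hr
      have hr0 : (0:ℝ) < r := by linarith
      have h1 : HasDerivAt (fun x : ℝ => x ^ n) ((n:ℝ) * r ^ (n-1)) r := hasDerivAt_pow n r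
      have h2 : HasDerivAt (deriv u) (deriv (deriv u) r) r := (hdiffdu r hr0).hasDerivAt
      have h3 : HasDerivAt (fun x => x ^ n * deriv u x) _ r := h1.mul h2
      convert h3 using 1
      have heq := hode' r hr
      have hdd : deriv (deriv u) r
          = (V r - Real.log (u r ^ 2)) * u r - ((N:ℝ)-1)/r * deriv u r := by linarith
      have hpow : r ^ n = r ^ (n-1) * r := by
        rw [← pow_succ]
        congr 1
        omega
      rw [hdd, hcast, hpow]
      field_simp
      ring
    have hgrow : ∀ k : ℕ, ∃ C : ℝ, 0 < C ∧ ∃ B : ℝ, T0 ≤ B ∧ ∀ r, B ≤ r → C * r ^ k ≤ u r := by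
      intro k
      induction k with
      | zero =>
        refine ⟨v, hv, T0, le_rfl, fun r hr => ?_⟩
        obtain ⟨-, -, hrT, -⟩ := hT0 r hr
        simpa using hT r hrT
      | succ k ih =>
        obtain ⟨C, hC, B, hB, hub⟩ := ih
        have hd1 : ∀ r, B ≤ r → C * r ^ (k + n) ≤ deriv F r := by
          intro r hr
          have hrT0 : T0 ≤ r := le_trans hB hr
          obtain ⟨hc, hr1, -, -⟩ := hT0 r hrT0
          have hr0 : (0:ℝ) < r := by linarith
          rw [(hFder r hrT0).deriv]
          have h1 : C * r ^ k ≤ u r := hub r hr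
          have h3 : 0 < u r := hupos r hr0
          have h4 : C * r ^ (k+n) = r ^ n * (1 * (C * r ^ k)) := by rw [pow_add]; ring
          rw [h4]
          apply mul_le_mul_of_nonneg_left _ (by positivity)
          have := mul_le_mul hc h1 (by positivity) (by linarith)
          linarith
        have hdiffF : ∀ r, B ≤ r → DifferentiableAt ℝ F r := fun r hr =>
          (hFder r (le_trans hB hr)).differentiableAt
        obtain ⟨C1, hC1, B1, hB1, hF1⟩ := grow (k+n) hC hdiffF hd1
        have hd2 : ∀ r, B1 ≤ r → C1 * r ^ (k+1) ≤ deriv u r := by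
          intro r hr
          have hrB : B ≤ r := le_trans hB1 hr
          have hrT0 : T0 ≤ r := le_trans hB hrB
          obtain ⟨-, hr1, -, -⟩ := hT0 r hrT0
          have hr0 : (0:ℝ) < r := by linarith
          have h1 : C1 * r ^ (k + n + 1) ≤ F r := hF1 r hr
          have hsplit : r ^ (k + n + 1) = r ^ n * r ^ (k+1) := by
            rw [← pow_add]
            congr 1
            omega
          rw [hF] at h1
          rw [hsplit, ← mul_assoc, mul_comm C1 (r ^ n), mul_assoc] at h1
          exact le_of_mul_le_mul_left h1 (by positivity)
        have hdiffu' : ∀ r, B1 ≤ r → DifferentiableAt ℝ u r := by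
          intro r hr
          have hrT0 : T0 ≤ r := le_trans hB (le_trans hB1 hr)
          obtain ⟨-, hr1, -, -⟩ := hT0 r hrT0
          exact hdiffu r (by linarith)
        obtain ⟨C2, hC2, B2, hB2, hu2⟩ := grow (k+1) hC1 hdiffu' hd2
        refine ⟨C2, hC2, max B2 1, ?_, ?_⟩
        · exact le_trans hB (le_trans hB1 (le_trans hB2 (le_max_left _ _)))
        · intro r hr
          have h1 : C2 * r ^ (k+1+1) ≤ u r := hu2 r (le_trans (le_max_left _ _) hr)
          have hr1 : (1:ℝ) ≤ r := le_trans (le_max_right _ _) hr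
          have h2 : r ^ (k+1) * 1 ≤ r ^ (k+1) * r := by
            apply mul_le_mul_of_nonneg_left hr1 (by positivity)
          rw [mul_one] at h2
          rw [pow_succ] at h1
          nlinarith
    obtain ⟨k, hk⟩ := exists_nat_gt (θ/2)
    obtain ⟨C, hC, B, hB, hub⟩ := hgrow k
    have htend2 : Tendsto (fun r:ℝ => r ^ (θ/2 - (k:ℝ))) atTop (nhds 0) := by
      have h1 := tendsto_rpow_neg_atTop (by linarith : 0 < (k:ℝ) - θ/2)
      have h2 : ∀ r : ℝ, r ^ (-((k:ℝ) - θ/2)) = r ^ (θ/2 - (k:ℝ)) := by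
        intro r; rw [neg_sub]
      simpa [h2] using h1
    have hev2 : ∀ᶠ r in atTop, C ≤ r ^ (θ/2 - (k:ℝ)) := by
      filter_upwards [hdec 1 one_pos, eventually_ge_atTop (max B 1)] with r hr hrB
      obtain ⟨hu0, hub1⟩ := hr
      have hr1 : (1:ℝ) ≤ r := le_trans (le_max_right _ _) hrB
      have hr0 : (0:ℝ) < r := by linarith
      have h1 : C * r ^ k ≤ u r := hub r (le_trans (le_max_left _ _) hrB)
      have h3 : C * r ^ k ≤ r ^ (θ/2) := by
        rw [one_mul] at hub1
        linarith
      have h4 : r ^ (θ/2 - (k:ℝ)) = r ^ (θ/2) / r ^ k := by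
        rw [Real.rpow_sub hr0, Real.rpow_natCast]
      rw [h4, le_div_iff₀ (by positivity)]
      linarith [h3, mul_comm C (r ^ k)]
    obtain ⟨r0, hr0a, hr0b⟩ := (hev2.and (htend2.eventually_lt_const hC)).exists
    linarith
  -- the Gaussian comparison
  obtain ⟨τ, hττ', hτhalf, hτ0⟩ : ∃ t : ℝ, τ' < t ∧ t < 1/2 ∧ 0 < t :=
    ⟨(τ' + 1/2)/2, by linarith, by linarith, by linarith⟩
  obtain ⟨aa, haa0, haaeq⟩ : ∃ A : ℝ, 0 < A ∧ A = 2*τ - 4*τ^2 :=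
    ⟨2*τ - 4*τ^2, aa_pos hτ0 hτhalf, rfl⟩
  obtain ⟨E, hMEeq⟩ : ∃ E : ℝ, M - E = 3 + θ^2/(4*aa) :=
    ⟨M - 3 - θ^2/(4*aa), by ring⟩
  obtain ⟨ε, hε0, hlogε⟩ : ∃ e : ℝ, 0 < e ∧ 2 * Real.log e = E :=
    ⟨Real.exp (E/2), Real.exp_pos _, by rw [Real.log_exp]; ring⟩
  have hevent : ∀ᶠ r in atTop, (0 < u r ∧ u r ≤ ε * r ^ (θ/2)) ∧
      Real.log (u r ^ 2) ≤ E + θ * Real.log r ∧ M + θ * Real.log r ≤ V r ∧ (1:ℝ) ≤ r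
      ∧ (a r = 0 ∧ b r = 0) := by
    filter_upwards [hdec ε hε0, hlog ε hε0, hM, eventually_ge_atTop (1:ℝ),
      eventually_gt_atTop (max sa sb), eventually_gt_atTop (0:ℝ)] with r h1 h2 h3 h4 h5 h6
    refine ⟨h1, ?_, by linarith, h4, hab r h6 h5⟩
    rw [← hlogε]
    exact h2
  obtain ⟨R, hR⟩ := eventually_atTop.1 hevent
  have hR1 : (1:ℝ) ≤ R := (hR R le_rfl).2.2.2.1
  have hR0 : (0:ℝ) < R := by linarith
  set K0 : ℝ := u R with hK0
  have hK0pos : 0 < K0 := (hR R le_rfl).1.1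
  set w : ℝ → ℝ := fun r => K0 * Real.exp (-(τ * (r - R)^2)) with hw
  have hwval : ∀ r, w r = K0 * Real.exp (-(τ * (r - R)^2)) := fun r => rfl
  have hwpos : ∀ r, 0 < w r := fun r => mul_pos hK0pos (Real.exp_pos _)
  have hwcont : Continuous w := by
    apply continuous_const.mul
    apply Real.continuous_exp.comp
    exact (continuous_const.mul ((continuous_id.sub continuous_const).pow 2)).neg
  set w1 : ℝ → ℝ := fun r => (-(2*τ*(r - R))) * w r with hw1
  have hw1val : ∀ r, w1 r = (-(2*τ*(r - R))) * w r := fun r => rfl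
  set w2 : ℝ → ℝ := fun r => (-(2*τ)) * w r + (-(2*τ*(r - R))) * w1 r with hw2
  have hw2val : ∀ r, w2 r = (-(2*τ)) * w r + (-(2*τ*(r - R))) * w1 r := fun r => rfl
  have hwd : ∀ r, HasDerivAt w (w1 r) r := by
    intro r
    have h0 : HasDerivAt (fun x : ℝ => x - R) 1 r := (hasDerivAt_id r).sub_const R
    have h1 : HasDerivAt (fun x : ℝ => -(τ * (x - R)^2)) (-(2*τ*(r-R))) r := by
      have h2 : HasDerivAt (fun x : ℝ => -(τ * (x - R)^2)) _ r := ((h0.pow 2).const_mul τ).neg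
      convert h2 using 1
      simp
      ring
    have h3 := (h1.exp).const_mul K0
    have h4 : K0 * (Real.exp (-(τ * (r - R)^2)) * -(2*τ*(r-R))) = w1 r := by
      rw [hw1val, hwval]
      ring
    rw [h4] at h3
    exact h3
  have hw1d : ∀ r, HasDerivAt w1 (w2 r) r := by
    intro r
    have h1 : HasDerivAt (fun x : ℝ => -(2*τ*(x - R))) (-(2*τ)) r := by
      have h2 : HasDerivAt (fun x : ℝ => -(2*τ*(x - R))) _ r := (((hasDerivAt_id r).sub_const R).const_mul (2*τ)).neg
      convert h2 using 1
      ring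
    have h3 := h1.mul (hwd r)
    rw [← hw2val r] at h3
    exact h3
  -- the comparison inequality
  have hcomp : ∀ r, R ≤ r → u r ≤ w r := by
    by_contra hcon
    push_neg at hcon
    obtain ⟨r1, hr1R, hr1⟩ := hcon
    set d : ℝ := u r1 - w r1 with hd
    have hd0 : 0 < d := by rw [hd]; linarith
    obtain ⟨T, hTr1, hTu⟩ := hfreq d hd0 (r1 + 1)
    have hRT : R < T := by linarith
    set g : ℝ → ℝ := fun r => u r - w r with hg
    have hgval : ∀ r, g r = u r - w r := fun r => rfl
    have hgcont : ContinuousOn g (Icc R T) := by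
      apply ContinuousOn.sub
      · exact hucont.mono (fun x hx => le_trans hR0.le hx.1)
      · exact hwcont.continuousOn
    obtain ⟨rs, hrsmem, hrsmax⟩ :=
      isCompact_Icc.exists_isMaxOn ⟨R, left_mem_Icc.2 hRT.le⟩ hgcont
    have hgr1 : d ≤ g rs := by
      have h1 : g r1 ≤ g rs := hrsmax ⟨hr1R, by linarith⟩
      rw [hgval r1] at h1
      linarith
    have hwR : w R = K0 := by
      rw [hwval R]
      simp
    have hgR : g R = 0 := by
      rw [hgval R, hwR, hK0]
      ring
    have hgT : g T < d := by
      have := hwpos T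
      rw [hgval T]
      linarith
    have hrsR : R < rs := by
      rcases lt_or_eq_of_le hrsmem.1 with h | h
      · exact h
      · exfalso
        rw [← h, hgR] at hgr1
        linarith
    have hrsT : rs < T := by
      rcases lt_or_eq_of_le hrsmem.2 with h | h
      · exact h
      · exfalso
        rw [h] at hgr1
        linarith
    have hrs0 : (0:ℝ) < rs := by linarith
    have hloc : IsLocalMax g rs := hrsmax.isLocalMax (Icc_mem_nhds hrsR hrsT)
    have hderivg : ∀ y : ℝ, 0 < y → deriv g y = deriv u y - w1 y := by
      intro y hy0
      rw [hg, deriv_fun_sub (hdiffu y hy0) (hwd y).differentiableAt, (hwd y).deriv]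
    have hderiv0 : deriv u rs = w1 rs := by
      have h1 := hloc.deriv_eq_zero
      rw [hderivg rs hrs0] at h1
      linarith
    have hsecond : deriv (deriv u) rs ≤ w2 rs := by
      by_contra hcon2
      push_neg at hcon2
      set h : ℝ → ℝ := fun r => deriv u r - w1 r with hh
      have hh0 : h rs = 0 := by
        show deriv u rs - w1 rs = 0
        rw [hderiv0]
        ring
      have hhd : HasDerivAt h (deriv (deriv u) rs - w2 rs) rs :=
        ((hdiffdu rs hrs0).hasDerivAt).sub (hw1d rs)
      have hpos' : ∀ᶠ x in nhdsWithin rs (Ioi rs), 0 < slope h rs x := by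
        have h1 := hasDerivAt_iff_tendsto_slope.1 hhd
        have h2 : ∀ᶠ x in nhdsWithin rs {rs}ᶜ, 0 < slope h rs x :=
          h1.eventually_const_lt (by linarith)
        exact h2.filter_mono (nhdsWithin_mono rs (fun x hx => ne_of_gt hx))
      obtain ⟨bb, hbb, hIoo⟩ := mem_nhdsGT_iff_exists_Ioo_subset.1 hpos'
      obtain ⟨δ2, hδ2pos, hδ2⟩ := Metric.eventually_nhds_iff.1 hloc
      set x0 : ℝ := min bb (rs + δ2) with hx0
      have hrsx0 : rs < x0 := lt_min hbb (by linarith)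
      set x1 : ℝ := (rs + x0)/2 with hx1
      have hx1a : rs < x1 := by rw [hx1]; linarith
      have hx1b : x1 < x0 := by rw [hx1]; linarith
      have hmono2 : StrictMonoOn g (Icc rs x1) := by
        apply strictMonoOn_of_deriv_pos (convex_Icc _ _)
        · apply ContinuousOn.sub (hucont.mono ?_) hwcont.continuousOn
          intro x hx
          exact le_trans hrs0.le hx.1
        · intro y hy
          rw [interior_Icc] at hy
          have hy0 : 0 < y := lt_trans hrs0 hy.1
          rw [hderivg y hy0]
          have hyIoo : y ∈ Ioo rs bb :=
            ⟨hy.1, lt_of_lt_of_le (lt_trans hy.2 hx1b) (min_le_left _ _)⟩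
          have hs := hIoo hyIoo
          rw [mem_setOf_eq, slope_def_field, hh0, sub_zero] at hs
          have h2 : 0 < y - rs := sub_pos.2 hy.1
          have h3 : 0 < h y := by
            rcases div_pos_iff.1 hs with ⟨ha, _⟩ | ⟨_, hb⟩
            · exact ha
            · linarith
          exact h3
      have hlt : g rs < g x1 :=
        hmono2 (left_mem_Icc.2 hx1a.le) (right_mem_Icc.2 hx1a.le) hx1a
      have hge : g x1 ≤ g rs := by
        apply hδ2
        rw [Real.dist_eq, abs_of_pos (by linarith : 0 < x1 - rs)]
        have : x0 ≤ rs + δ2 := min_le_right _ _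
        rw [hx1]
        linarith
      linarith
    -- algebra at the max point
    have hρ0 : 0 ≤ rs - R := by linarith
    have hUW : w rs < u rs := by
      have h1 : d ≤ u rs - w rs := by
        rw [hgval rs] at hgr1
        exact hgr1
      linarith
    have hWpos : 0 < w rs := hwpos rs
    have hUpos : 0 < u rs := hupos rs hrs0
    obtain ⟨⟨-, hudec⟩, hulog, hVlb, -, hars, hbrs⟩ := hR rs (by linarith)
    have hodeeq : deriv (deriv u) rs + ((N:ℝ)-1)/rs * deriv u rs
        = (V rs - Real.log (u rs ^ 2)) * u rs := by
      have h0 := hode rs hrs0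
      simp only [hars, hbrs, mul_zero, add_zero] at h0
      linear_combination h0
    have hderueq : deriv u rs = -(2*τ*(rs - R)) * w rs := by
      rw [hderiv0, hw1val]
    have hw2eq : w2 rs = (4*τ^2*(rs - R)^2 - 2*τ) * w rs := by
      rw [hw2val, hw1val]
      ring
    have hstep1 : (V rs - Real.log (u rs ^ 2)) * u rs ≤ (4*τ^2*(rs - R)^2 - 2*τ) * w rs := by
      have h2 : deriv (deriv u) rs ≤ (4*τ^2*(rs - R)^2 - 2*τ) * w rs := by
        rw [← hw2eq]
        exact hsecond
      have hN1 : (1:ℝ) ≤ (N:ℝ) - 1 := by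
        have : (2:ℝ) ≤ (N:ℝ) := by exact_mod_cast hN
        linarith
      have h3 : ((N:ℝ)-1)/rs * deriv u rs ≤ 0 := by
        rw [hderueq]
        have h4 : 0 ≤ 2*τ*(rs - R)*(w rs) := by positivity
        have h5 : 0 ≤ ((N:ℝ)-1)/rs := by positivity
        have h6 := nonpos_helper h5 h4
        have h7 : ((N:ℝ)-1)/rs * (-(2*τ*(rs - R)) * w rs)
            = ((N:ℝ)-1)/rs * (-(2*τ*(rs - R)*(w rs))) := by ring
        rw [h7]
        exact h6
      rw [← hodeeq]
      linarith
    have hlogW : Real.log (w rs ^ 2) = 2*Real.log K0 - 2*(τ*(rs - R)^2) := by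
      have h1 : Real.log (w rs ^ 2) = 2 * Real.log (w rs) := by rw [Real.log_pow]; norm_num
      rw [h1, hwval rs, Real.log_mul hK0pos.ne' (Real.exp_pos _).ne', Real.log_exp]
      ring
    have hlogK0 : 2*Real.log K0 ≤ E + θ * Real.log R := by
      have h1 := (hR R le_rfl).2.1
      have h2 : Real.log (u R ^ 2) = 2 * Real.log (u R) := by rw [Real.log_pow]; norm_num
      rw [h2] at h1
      rw [hK0]
      linarith
    have hloglb : -(|θ| * (rs - R)) ≤ θ * Real.log rs - θ * Real.log R := by
      have hL0 : 0 ≤ Real.log rs - Real.log R := by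
        have := Real.log_le_log hR0 (show R ≤ rs by linarith)
        linarith
      have hLρ : Real.log rs - Real.log R ≤ rs - R := by
        have h1 : Real.log (rs / R) ≤ rs / R - 1 := Real.log_le_sub_one_of_pos (by positivity)
        rw [Real.log_div hrs0.ne' hR0.ne'] at h1
        have h2 : rs / R - 1 = (rs - R)/R := by field_simp
        have h3 : (rs - R)/R ≤ rs - R := div_le_self (by linarith) hR1
        linarith
      have h9 : -(|θ| * (rs - R)) ≤ θ * (Real.log rs - Real.log R) := theta_log_lb hL0 hLρ
      linarith [h9]
    have hstep2 : 4*τ^2*(rs - R)^2 - 2*τ ≤ V rs - Real.log (w rs ^ 2) := by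
      have hME : M - E = 3 + θ^2/(4*aa) := hMEeq
      have hkey : 0 ≤ aa*(rs - R)^2 - |θ| * (rs - R) + θ^2/(4*aa) := by
        have h8 := key_quad (A := aa) (t := |θ|) (ρ := rs - R) haa0
        rw [sq_abs] at h8
        exact h8
      have haaρ : aa*(rs - R)^2 = 2*τ*(rs - R)^2 - 4*τ^2*(rs - R)^2 := by rw [haaeq]; ring
      have hθ4 : 0 ≤ θ^2/(4*aa) := by positivity
      linarith [hVlb, hlogW, hlogK0, hloglb, hkey, hME, hτ0, haaρ]
    have hstep3 : (V rs - Real.log (u rs ^ 2)) * u rs ≤ (V rs - Real.log (w rs ^ 2)) * w rs :=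
      le_trans hstep1 (mul_le_mul_of_nonneg_right hstep2 hWpos.le)
    have hstep6 : V rs ≤ Real.log (u rs ^ 2) + 2 := max_contra hWpos hUpos hUW hstep3
    have hME2 : M - E = 3 + θ^2/(4*aa) := hMEeq
    have hθ4 : 0 ≤ θ^2/(4*aa) := by positivity
    linarith [hulog, hVlb, hstep6]
  -- conclude the limit
  have hbound : ∀ᶠ r in atTop,
      u r * Real.exp (τ' * r^2) ≤ K0 * Real.exp (-r) := by
    filter_upwards [eventually_ge_atTop R, eventually_ge_atTop ((2*τ*R + 1)/(τ - τ')),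
      eventually_ge_atTop (1:ℝ)] with r h1 h2 h3
    have hr0 : (0:ℝ) < r := by linarith
    have hur : u r ≤ w r := hcomp r h1
    have h2' : 2*τ*R + 1 ≤ (τ - τ')*r := by
      rw [div_le_iff₀ (by linarith : (0:ℝ) < τ - τ')] at h2
      linarith
    have hexp : -(τ * (r - R)^2) + τ' * r^2 ≤ -r := exp_quad_bound hτ0 hR0 hr0 h2'
    calc u r * Real.exp (τ' * r^2) ≤ w r * Real.exp (τ' * r^2) := by
          apply mul_le_mul_of_nonneg_right hur (Real.exp_pos _).le
      _ = K0 * Real.exp (-(τ * (r - R)^2) + τ' * r^2) := by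
          rw [hwval r, Real.exp_add]
          ring
      _ ≤ K0 * Real.exp (-r) := by
          apply mul_le_mul_of_nonneg_left _ hK0pos.le
          exact Real.exp_le_exp.2 hexp
  have hnn : ∀ᶠ r in atTop, 0 ≤ u r * Real.exp (τ' * r^2) := by
    filter_upwards [eventually_gt_atTop (0:ℝ)] with r hr
    exact mul_nonneg (hupos r hr).le (Real.exp_pos _).le
  have htendK : Tendsto (fun r : ℝ => K0 * Real.exp (-r)) atTop (nhds 0) := by
    have h1 := Real.tendsto_exp_neg_atTop_nhds_zero.const_mul K0
    simpa using h1
  exact squeeze_zero' hnn hbound htendK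
end
end

section
/- Let u be a solution of problem (P3). Then there exists R > 0 such that u'(r) < 0 for all r ≥ R; moreover lim_{r→∞} r^{N−1}u'(r) = 0 and liminf_{r→∞} r^{N−1}V_δ(r)u(r) = 0. -/
open Real Filter Set MeasureTheory Topology

noncomputable section

-- Auxiliary lemmas
set_option maxHeartbeats 2000000

private lemma P3aux_diff_le {φ ψ φ' ψ' : ℝ → ℝ} {A : ℝ}
    (hφ : ∀ r, A ≤ r → HasDerivAt φ (φ' r) r)
    (hψ : ∀ r, A ≤ r → HasDerivAt ψ (ψ' r) r)
    (hle : ∀ r, A ≤ r → φ' r ≤ ψ' r) :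
    ∀ r, A ≤ r → φ r - φ A ≤ ψ r - ψ A := by
  intro r hr
  have hmono : MonotoneOn (fun x => ψ x - φ x) (Ici A) := by
    apply monotoneOn_of_deriv_nonneg (convex_Ici A)
    · intro x hx
      exact ((hψ x hx).sub (hφ x hx)).continuousAt.continuousWithinAt
    · intro x hx
      rw [interior_Ici] at hx
      exact ((hψ x hx.le).sub (hφ x hx.le)).differentiableAt.differentiableWithinAt
    · intro x hx
      rw [interior_Ici] at hx
      rw [show deriv (fun x => ψ x - φ x) x = deriv (ψ - φ) x from rfl, ((hψ x hx.le).sub (hφ x hx.le)).deriv]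
      exact sub_nonneg.2 (hle x hx.le)
  have := hmono self_mem_Ici (mem_Ici.2 hr) hr
  simp only at this
  linarith

private lemma P3aux_strictMono {g g' : ℝ → ℝ} {A : ℝ}
    (hg : ∀ r, A ≤ r → HasDerivAt g (g' r) r)
    (hpos : ∀ r, A ≤ r → 0 < g' r) : StrictMonoOn g (Ici A) := by
  apply strictMonoOn_of_deriv_pos (convex_Ici A)
  · intro x hx; exact (hg x hx).continuousAt.continuousWithinAt
  · intro x hx
    rw [interior_Ici] at hx
    rw [(hg x hx.le).deriv]; exact hpos x hx.le

private lemma P3aux_tendsto_sSup {g : ℝ → ℝ} {A C : ℝ}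
    (hmono : MonotoneOn g (Ici A)) (hbdd : ∀ r, A ≤ r → g r ≤ C) :
    ∃ L, L ≤ C ∧ Tendsto g atTop (𝓝 L) ∧ ∀ r, A ≤ r → g r ≤ L := by
  set S := g '' Ici A with hS
  have hne : S.Nonempty := ⟨g A, A, self_mem_Ici, rfl⟩
  have hbd : BddAbove S := ⟨C, by rintro x ⟨r, hr, rfl⟩; exact hbdd r hr⟩
  refine ⟨sSup S, csSup_le hne (by rintro x ⟨r, hr, rfl⟩; exact hbdd r hr), ?_, ?_⟩
  · rw [Metric.tendsto_atTop]
    intro ε hε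
    obtain ⟨x, hxS, hx⟩ := exists_lt_of_lt_csSup hne (by linarith : sSup S - ε < sSup S)
    obtain ⟨r₀, hr₀, rfl⟩ := hxS
    refine ⟨r₀, fun r hr => ?_⟩
    have h1 : g r₀ ≤ g r := hmono hr₀ (le_trans hr₀ hr) hr
    have h2 : g r ≤ sSup S := le_csSup hbd ⟨r, le_trans hr₀ hr, rfl⟩
    rw [Real.dist_eq, abs_lt]
    constructor <;> linarith
  · intro r hr
    exact le_csSup hbd ⟨r, hr, rfl⟩

private lemma P3aux_tendsto_sInf {g : ℝ → ℝ} {A C : ℝ}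
    (hmono : AntitoneOn g (Ici A)) (hbdd : ∀ r, A ≤ r → C ≤ g r) :
    ∃ L, C ≤ L ∧ Tendsto g atTop (𝓝 L) ∧ ∀ r, A ≤ r → L ≤ g r := by
  obtain ⟨L, hL1, hL2, hL3⟩ := P3aux_tendsto_sSup (g := fun r => -g r) (C := -C)
    (fun x hx y hy hxy => neg_le_neg (hmono hx hy hxy)) (fun r hr => neg_le_neg (hbdd r hr))
  refine ⟨-L, by linarith, ?_, fun r hr => by have := hL3 r hr; linarith⟩
  have := hL2.neg
  simpa using this

private lemma P3aux_poly_growth {g f : ℝ → ℝ} {A C : ℝ} {n : ℕ}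
    (hg : ∀ r, A ≤ r → HasDerivAt g (f r) r)
    (hf : ∀ r, A ≤ r → C * r ^ n ≤ f r) (hC : 0 < C) :
    ∀ᶠ r in atTop, C / (2 * (n + 1)) * r ^ (n + 1) ≤ g r := by
  set c : ℝ := C / (n + 1) with hc
  have hn1 : (0:ℝ) < (n:ℝ) + 1 := by positivity
  have hφ : ∀ r, A ≤ r → HasDerivAt (fun x => c * x ^ (n+1)) (C * r ^ n) r := by
    intro r _
    have h := (hasDerivAt_pow (n+1) r).const_mul c
    refine h.congr_deriv ?_
    push_cast
    rw [hc]
    field_simp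
  have key := P3aux_diff_le hφ hg (fun r hr => hf r hr)
  have htend : Tendsto (fun r : ℝ => C / (2 * (n + 1)) * r ^ (n + 1)) atTop atTop := by
    apply Tendsto.const_mul_atTop (by positivity)
    exact tendsto_pow_atTop (Nat.succ_ne_zero n)
  have hev := htend.eventually_ge_atTop (c * A ^ (n+1) - g A)
  filter_upwards [hev, eventually_ge_atTop A] with r h1 h2
  have h3 := key r h2
  have h4 : c = 2 * (C / (2 * ((n:ℝ) + 1))) := by
    rw [hc]; field_simp
  have h5 : c * r ^ (n+1) = 2 * (C / (2 * ((n:ℝ) + 1)) * r ^ (n+1)) := by rw [h4]; ring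
  push_cast at h5 ⊢
  linarith [h3, h1, h5]

/-- Let `u` be a solution of problem (P3). Then there exists `R > 0` with
`u' < 0` on `[R,∞)`; moreover `r^{N-1}u'(r) → 0` as `r → ∞` and
`liminf_{r→∞} r^{N-1}V_δ(r)u(r) = 0`. -/
theorem sol_P3_derivative_asymptotics (N : ℕ) (hN : 2 ≤ N) (V a b : ℝ → ℝ) (δ θ : ℝ)
    (hV1 : CondV1 N V) (hVab : CondVab a b) (hδ : 0 ≤ δ) (hθ : MemTheta N V θ)
    (u : ℝ → ℝ)
    (hu : SolP3 N (fun r => V r + δ * a r) (fun r => 1 + δ * b r) θ u) :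
    (∃ R : ℝ, 0 < R ∧ ∀ r : ℝ, R ≤ r → deriv u r < 0) ∧
    Filter.Tendsto (fun r : ℝ => r ^ (N - 1) * deriv u r) Filter.atTop (nhds 0) ∧
    Filter.liminf (fun r : ℝ => r ^ (N - 1) * ((V r + δ * a r) * u r)) Filter.atTop = 0 := by
  obtain ⟨hVC2, -, -⟩ := hV1
  obtain ⟨-, ha2, -, hb2, -, -⟩ := hVab
  obtain ⟨-, hθM⟩ := hθ
  obtain ⟨hucont, huC2, hODE, hupos, -, hulim⟩ := hu
  obtain ⟨m, rfl⟩ : ∃ m, N = m + 2 := ⟨N - 2, by omega⟩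
  have hNm : m + 2 - 1 = m + 1 := rfl
  rw [hNm]
  obtain ⟨M, hM⟩ := hθM
  -- support radius
  obtain ⟨Ra, hRa⟩ : ∃ R : ℝ, ∀ r, R ≤ r → a r = 0 ∧ b r = 0 := by
    obtain ⟨Ca, hCa⟩ := ha2.isBounded.subset_closedBall 0
    obtain ⟨Cb, hCb⟩ := hb2.isBounded.subset_closedBall 0
    refine ⟨max Ca Cb + 1, fun r hr => ⟨?_, ?_⟩⟩
    · refine image_eq_zero_of_notMem_tsupport (fun hmem => ?_)
      have := hCa hmem
      simp only [Metric.mem_closedBall, Real.dist_eq, sub_zero] at this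
      have h1 : Ca ≤ max Ca Cb := le_max_left _ _
      rw [abs_le] at this
      linarith [this.2]
    · refine image_eq_zero_of_notMem_tsupport (fun hmem => ?_)
      have := hCb hmem
      simp only [Metric.mem_closedBall, Real.dist_eq, sub_zero] at this
      have h1 : Cb ≤ max Ca Cb := le_max_right _ _
      rw [abs_le] at this
      linarith [this.2]
  set ε : ℝ := Real.exp ((M - 1) / 2) with hεdef
  have hε : 0 < ε := Real.exp_pos _
  have hev2 : ∀ᶠ r : ℝ in atTop, |r ^ (-(θ / 2))| * |u r| < ε := by
    have := hulim.eventually (Metric.ball_mem_nhds (0:ℝ) hε)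
    filter_upwards [this] with r hr
    simpa [Real.dist_eq, abs_mul] using hr
  obtain ⟨R₀, hR₀⟩ := ((hM.and hev2).and (eventually_ge_atTop (max 1 (Ra + 1)))).exists_forall_of_atTop
  set A : ℝ := max R₀ 1 with hAdef
  have hA1 : (1:ℝ) ≤ A := le_max_right _ _
  have hA0 : (0:ℝ) < A := lt_of_lt_of_le one_pos hA1
  have hP : ∀ r, A ≤ r → (M ≤ V r - θ * Real.log r ∧ |r ^ (-(θ / 2))| * |u r| < ε)
      ∧ max 1 (Ra + 1) ≤ r := by
    intro r hr
    exact hR₀ r (le_trans (le_max_left _ _) hr)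
  have hr1 : ∀ r, A ≤ r → (1:ℝ) ≤ r := fun r hr => le_trans hA1 hr
  have hr0 : ∀ r, A ≤ r → (0:ℝ) < r := fun r hr => lt_of_lt_of_le hA0 hr
  have hab0 : ∀ r, A ≤ r → a r = 0 ∧ b r = 0 := by
    intro r hr
    have := (hP r hr).2
    exact hRa r (by have := le_trans (le_max_right 1 (Ra+1)) this; linarith)
  -- u r < ε * r ^ (θ/2)
  have huup : ∀ r, A ≤ r → u r < ε * r ^ (θ / 2) := by
    intro r hr
    have h0 : (0:ℝ) < r := hr0 r hr
    have h2 := ((hP r hr).1).2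
    have hup : 0 < u r := hupos r h0
    have hrp : (0:ℝ) < r ^ (-(θ / 2)) := Real.rpow_pos_of_pos h0 _
    rw [abs_of_pos hrp, abs_of_pos hup] at h2
    have h3 : r ^ (-(θ / 2)) * u r * r ^ (θ / 2) < ε * r ^ (θ / 2) :=
      mul_lt_mul_of_pos_right h2 (Real.rpow_pos_of_pos h0 _)
    calc u r = r ^ (-(θ / 2)) * u r * r ^ (θ / 2) := by
            rw [Real.rpow_neg h0.le]
            field_simp
      _ < ε * r ^ (θ / 2) := h3
  -- key log bound
  have hkey : ∀ r, A ≤ r → 1 ≤ V r - Real.log (u r ^ 2) := by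
    intro r hr
    have h0 : (0:ℝ) < r := hr0 r hr
    have hup : 0 < u r := hupos r h0
    have hlog : Real.log (u r ^ 2) ≤ (M - 1) + θ * Real.log r := by
      have h1 : Real.log (u r) ≤ Real.log (ε * r ^ (θ / 2)) :=
        Real.log_le_log hup (huup r hr).le
      rw [Real.log_mul (ne_of_gt hε) (ne_of_gt (Real.rpow_pos_of_pos h0 _)),
        Real.log_rpow h0, hεdef, Real.log_exp] at h1
      rw [Real.log_pow]
      push_cast
      linarith
    have hVbd := ((hP r hr).1).1
    linarith
  -- derivatives
  have hud : ∀ r : ℝ, 0 < r → HasDerivAt u (deriv u r) r := by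
    intro r hr
    exact (((huC2.differentiableOn (by norm_num)).differentiableAt
      (Ioi_mem_nhds hr))).hasDerivAt
  have hud2C : ContDiffOn ℝ 1 (deriv u) (Ioi 0) := by
    exact huC2.deriv_of_isOpen (m := 1) isOpen_Ioi (by norm_num)
  have hud2 : ∀ r : ℝ, 0 < r → HasDerivAt (deriv u) (deriv (deriv u) r) r := by
    intro r hr
    exact ((hud2C.differentiableOn (by norm_num)).differentiableAt (Ioi_mem_nhds hr)).hasDerivAt
  set g : ℝ → ℝ := fun r => r ^ (m+1) * deriv u r with hgdef
  set f : ℝ → ℝ := fun r => r ^ (m+1) * (u r * (V r - Real.log (u r ^ 2))) with hfdef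
  have hgderiv : ∀ r, A ≤ r → HasDerivAt g (f r) r := by
    intro r hr
    have h0 : (0:ℝ) < r := hr0 r hr
    have h1 := (hasDerivAt_pow (m+1) r).mul (hud2 r h0)
    have hODEr : deriv (deriv u) r =
        -((((m:ℝ)+1)) / r * deriv u r) + V r * u r - u r * Real.log (u r ^ 2) := by
      have h2 := hODE r h0
      simp only [] at h2
      rw [(hab0 r hr).1, (hab0 r hr).2] at h2
      push_cast at h2
      ring_nf at h2 ⊢
      linarith
    have h2 : (↑(m+1) * r ^ (m + 1 - 1)) * deriv u r + r ^ (m+1) * deriv (deriv u) r = f r := by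
      rw [hODEr, hfdef]
      have hm1 : m + 1 - 1 = m := rfl
      rw [hm1]
      push_cast
      field_simp
      ring
    rw [← h2]
    exact h1
  have hfge : ∀ r, A ≤ r → r ^ (m+1) * u r ≤ f r := by
    intro r hr
    have h0 : (0:ℝ) < r := hr0 r hr
    have hup : 0 < u r := hupos r h0
    have hk := hkey r hr
    have hp : (0:ℝ) < r ^ (m+1) := pow_pos h0 _
    rw [hfdef]
    simp only
    nlinarith [mul_le_mul_of_nonneg_left hk (mul_pos hp hup).le]
  have hfpos : ∀ r, A ≤ r → 0 < f r := by
    intro r hr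
    have h0 : (0:ℝ) < r := hr0 r hr
    exact lt_of_lt_of_le (mul_pos (pow_pos h0 _) (hupos r h0)) (hfge r hr)
  have hgmono : StrictMonoOn g (Ici A) := P3aux_strictMono hgderiv hfpos
  -- Step A: g < 0 on [A,inf)
  have hgneg : ∀ r, A ≤ r → g r < 0 := by
    by_contra hcon
    push_neg at hcon
    obtain ⟨r₁, hr₁A, hgr₁⟩ := hcon
    have hr₂A : A ≤ r₁ + 1 := by linarith
    have hc : 0 < g (r₁ + 1) :=
      lt_of_le_of_lt hgr₁ (hgmono (mem_Ici.2 hr₁A) (mem_Ici.2 hr₂A) (by linarith))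
    have hgc : ∀ r, r₁ + 1 ≤ r → g (r₁+1) ≤ g r := by
      intro r hr
      rcases eq_or_lt_of_le hr with h | h
      · rw [← h]
      · exact (hgmono (mem_Ici.2 hr₂A) (mem_Ici.2 (le_trans hr₂A hr)) h).le
    have hu'pos : ∀ r, r₁ + 1 ≤ r → 0 < deriv u r := by
      intro r hr
      have h0 : (0:ℝ) < r := hr0 r (le_trans hr₂A hr)
      have hg : 0 < r ^ (m+1) * deriv u r := lt_of_lt_of_le hc (hgc r hr)
      rcases mul_pos_iff.mp hg with h | h
      · exact h.2
      · exact absurd (pow_pos h0 (m+1)) (not_lt.2 h.1.le)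
    have humono : StrictMonoOn u (Ici (r₁+1)) :=
      P3aux_strictMono (fun r hr => hud r (hr0 r (le_trans hr₂A hr))) hu'pos
    have hule : ∀ r, r₁ + 1 ≤ r → u (r₁+1) ≤ u r := by
      intro r hr
      rcases eq_or_lt_of_le hr with h | h
      · rw [← h]
      · exact (humono (mem_Ici.2 le_rfl) (mem_Ici.2 hr) h).le
    have boot : ∀ k : ℕ, ∃ C : ℝ, 0 < C ∧ ∃ R : ℝ, A ≤ R ∧ ∀ r, R ≤ r → C * r ^ k ≤ u r := by
      intro k
      induction k with
      | zero =>
        exact ⟨u (r₁+1), hupos _ (hr0 _ hr₂A), r₁+1, hr₂A,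
          fun r hr => by simpa using hule r hr⟩
      | succ k ih =>
        obtain ⟨C, hC, R, hRA, hR⟩ := ih
        have hf1 : ∀ r, R ≤ r → C * r ^ (m+1+k) ≤ f r := by
          intro r hr
          have hrA : A ≤ r := le_trans hRA hr
          have h0 := hr0 r hrA
          have h2 : C * r ^ k * r ^ (m+1) ≤ u r * r ^ (m+1) :=
            mul_le_mul_of_nonneg_right (hR r hr) (pow_pos h0 _).le
          calc C * r ^ (m+1+k) = C * r ^ k * r ^ (m+1) := by
                rw [show m+1+k = k + (m+1) from by omega, pow_add]; ring
            _ ≤ u r * r ^ (m+1) := h2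
            _ = r ^ (m+1) * u r := by ring
            _ ≤ f r := hfge r hrA
        have hgrow := P3aux_poly_growth (fun r hr => hgderiv r (le_trans hRA hr)) hf1 hC
        set C₂ : ℝ := C / (2 * (((m+1+k : ℕ) : ℝ) + 1)) with hC₂
        have hC₂pos : 0 < C₂ := by positivity
        have hd : ∀ᶠ r in atTop, C₂ * r ^ (k+1) ≤ deriv u r := by
          filter_upwards [hgrow, eventually_ge_atTop A] with r h1 h2
          have h0 := hr0 r h2
          have hp : (0:ℝ) < r ^ (m+1) := pow_pos h0 _
          have h3 : C₂ * r ^ (k+1) * r ^ (m+1) ≤ deriv u r * r ^ (m+1) := by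
            have h4 : C₂ * (r ^ (k+1) * r ^ (m+1)) ≤ g r := by
              rw [← pow_add, show k+1+(m+1) = m+1+k+1 from by omega]
              exact h1
            calc C₂ * r ^ (k+1) * r ^ (m+1) = C₂ * (r ^ (k+1) * r ^ (m+1)) := by ring
              _ ≤ g r := h4
              _ = deriv u r * r ^ (m+1) := by rw [hgdef]; ring
          exact le_of_mul_le_mul_right h3 hp
        obtain ⟨R₂, hR₂⟩ := (hd.and (eventually_ge_atTop A)).exists_forall_of_atTop
        have hd2 : ∀ r, max R₂ A ≤ r → C₂ * r ^ (k+1) ≤ deriv u r := fun r hr =>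
          (hR₂ r (le_trans (le_max_left _ _) hr)).1
        have hgrow2 := P3aux_poly_growth
          (fun r hr => hud r (hr0 r (le_trans (le_max_right R₂ A) hr))) hd2 hC₂pos
        obtain ⟨R₄, hR₄⟩ := (hgrow2.and (eventually_ge_atTop A)).exists_forall_of_atTop
        refine ⟨C₂ / (2 * (((k+1 : ℕ) : ℝ) + 1)), by positivity, max R₄ A,
          le_max_right _ _, fun r hr => ?_⟩
        have h1 := (hR₄ r (le_trans (le_max_left _ _) hr)).1
        have hrA : A ≤ r := le_trans (le_max_right _ _) hr
        have hr1' : (1:ℝ) ≤ r := hr1 r hrA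
        calc C₂ / (2 * (((k+1 : ℕ) : ℝ) + 1)) * r ^ (k+1)
            ≤ C₂ / (2 * (((k+1 : ℕ) : ℝ) + 1)) * r ^ (k+1+1) := by
              have := pow_le_pow_right₀ hr1' (show k+1 ≤ k+1+1 from by omega)
              have hpos : (0:ℝ) < C₂ / (2 * (((k+1 : ℕ) : ℝ) + 1)) := by positivity
              nlinarith
          _ ≤ u r := h1
    obtain ⟨k, hk⟩ : ∃ k : ℕ, θ / 2 < (k:ℝ) := exists_nat_gt _
    obtain ⟨C, hC, R, hRA, hR⟩ := boot k
    have htend : Tendsto (fun r : ℝ => C * r ^ ((k:ℝ) - θ/2)) atTop atTop :=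
      Tendsto.const_mul_atTop hC (tendsto_rpow_atTop (by linarith))
    have hbad : ∀ᶠ r : ℝ in atTop, C * r ^ ((k:ℝ) - θ/2) < ε := by
      filter_upwards [eventually_ge_atTop (max R A)] with r hr
      have hrA : A ≤ r := le_trans (le_max_right _ _) hr
      have h0 := hr0 r hrA
      have h1 : C * r ^ k < ε * r ^ (θ/2) :=
        lt_of_le_of_lt (hR r (le_trans (le_max_left _ _) hr)) (huup r hrA)
      have h2 : r ^ ((k:ℝ) - θ/2) = r ^ k / r ^ (θ/2) := by
        rw [Real.rpow_sub h0, Real.rpow_natCast]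
      rw [h2, ← mul_div_assoc, div_lt_iff₀ (Real.rpow_pos_of_pos h0 _)]
      exact h1
    obtain ⟨r, h1, h2⟩ := (htend.eventually_ge_atTop ε).and hbad |>.exists
    linarith
  -- u' < 0 on Ici A
  have hu'neg : ∀ r, A ≤ r → deriv u r < 0 := by
    intro r hr
    have h0 := hr0 r hr
    have hg : r ^ (m+1) * deriv u r < 0 := hgneg r hr
    rcases mul_neg_iff.mp hg with h | h
    · exact h.2
    · exact absurd (pow_pos h0 (m+1)) (not_lt.2 h.1.le)
  have huanti : AntitoneOn u (Ici A) := by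
    apply (strictAntiOn_of_deriv_neg (convex_Ici A) ?_ ?_).antitoneOn
    · exact hucont.mono (Ici_subset_Ici.2 hA0.le)
    · intro x hx; rw [interior_Ici] at hx; exact hu'neg x hx.le
  obtain ⟨L, hL0, hLtend, hLle⟩ :=
    P3aux_tendsto_sInf huanti (fun r hr => (hupos r (hr0 r hr)).le)
  have hLz : L = 0 := by
    by_contra hne
    have hLpos : 0 < L := lt_of_le_of_ne hL0 (Ne.symm hne)
    have hf1 : ∀ r, A ≤ r → L * r ^ (m+1) ≤ f r := by
      intro r hr
      have h2 : L * r ^ (m+1) ≤ u r * r ^ (m+1) :=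
        mul_le_mul_of_nonneg_right (hLle r hr) (pow_pos (hr0 r hr) _).le
      calc L * r ^ (m+1) ≤ u r * r ^ (m+1) := h2
        _ = r ^ (m+1) * u r := by ring
        _ ≤ f r := hfge r hr
    obtain ⟨r, h1, h2⟩ := ((P3aux_poly_growth hgderiv hf1 hLpos).and
      (eventually_ge_atTop A)).exists
    have h3 := hgneg r h2
    have hcp : (0:ℝ) < L / (2 * (((m+1 : ℕ) : ℝ) + 1)) := by positivity
    nlinarith [mul_pos hcp (pow_pos (hr0 r h2) (m+1+1))]
  have hu0 : Tendsto u atTop (𝓝 0) := hLz ▸ hLtend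
  -- g tends to Lg = 0
  obtain ⟨Lg, hLg0, hLgtend, hLgle⟩ :=
    P3aux_tendsto_sSup hgmono.monotoneOn (fun r hr => (hgneg r hr).le)
  have hLgz : Lg = 0 := by
    by_contra hne
    have hLgneg : Lg < 0 := lt_of_le_of_ne hLg0 hne
    rcases Nat.eq_zero_or_pos m with hm | hm
    · -- N = 2 case
      subst hm
      have hψd : ∀ s, A ≤ s → HasDerivAt (fun x : ℝ => Lg * Real.log x) (Lg / s) s := by
        intro s hs
        have := (Real.hasDerivAt_log (ne_of_gt (hr0 s hs))).const_mul Lg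
        simpa [div_eq_mul_inv] using this
      have hle' : ∀ s, A ≤ s → deriv u s ≤ Lg / s := by
        intro s hs
        have h0s := hr0 s hs
        have hgs : s ^ (0+1) * deriv u s ≤ Lg := hLgle s hs
        rw [le_div_iff₀ h0s]
        simpa [pow_one, mul_comm] using hgs
      have key := P3aux_diff_le (fun s hs => hud s (hr0 s hs)) hψd hle'
      set T : ℝ := (-(u A) + Lg * Real.log A - 1) / Lg with hT
      set r : ℝ := max A (Real.exp T) with hrdef
      have hrA : A ≤ r := le_max_left _ _
      have h0r := hr0 r hrA
      have hlogr : T ≤ Real.log r :=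
        (Real.le_log_iff_exp_le h0r).2 (le_max_right _ _)
      have h1 : Lg * Real.log r ≤ Lg * T := mul_le_mul_of_nonpos_left hlogr hLgneg.le
      have h2 : Lg * T = -(u A) + Lg * Real.log A - 1 := by
        rw [hT]; field_simp
      have h3 := key r hrA
      have h4 : 0 < u r := hupos r h0r
      nlinarith
    · -- N ≥ 3 case
      obtain ⟨j, rfl⟩ : ∃ j, m = j + 1 := ⟨m - 1, by omega⟩
      have hulow : ∀ r, A ≤ r → (-Lg) / (2 * ((j:ℝ)+1)) * (r ^ (j+1))⁻¹ ≤ u r := by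
        intro r hr
        have h0r := hr0 r hr
        set ψ : ℝ → ℝ := fun x => (-Lg / ((j:ℝ)+1)) * (x ^ (j+1))⁻¹ with hψ
        have hψd : ∀ s, r ≤ s → HasDerivAt ψ (Lg * (s ^ (j+2))⁻¹) s := by
          intro s hs
          have h0s : (0:ℝ) < s := lt_of_lt_of_le h0r hs
          have h1 := ((hasDerivAt_pow (j+1) s).inv (pow_ne_zero _ h0s.ne')).const_mul
            (-Lg / ((j:ℝ)+1))
          refine h1.congr_deriv ?_
          have : s ^ (j + 1 - 1) = s ^ j := rfl
          rw [this]
          push_cast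
          field_simp
          ring
        have hle' : ∀ s, r ≤ s → deriv u s ≤ Lg * (s ^ (j+2))⁻¹ := by
          intro s hs
          have h0s : (0:ℝ) < s := lt_of_lt_of_le h0r hs
          have hgs : s ^ (j+1+1) * deriv u s ≤ Lg := hLgle s (le_trans hr hs)
          have hp : (0:ℝ) < s ^ (j+2) := pow_pos h0s _
          rw [← div_eq_mul_inv, le_div_iff₀ hp]
          calc deriv u s * s ^ (j+2) = s ^ (j+1+1) * deriv u s := by ring
            _ ≤ Lg := hgs
        have key := P3aux_diff_le (A := r)
          (fun s hs => hud s (lt_of_lt_of_le h0r hs)) hψd hle'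
        have h2r : r ≤ 2 * r := by linarith
        have h3 := key (2*r) h2r
        have hu2r : 0 < u (2*r) := hupos _ (by linarith)
        -- ψ r - ψ (2r) ≥ (-Lg)/(2(j+1)) * r^{-(j+1)}
        have h2p : ((2:ℝ) ^ (j+1))⁻¹ ≤ 1/2 := by
          rw [inv_le_comm₀ (by positivity) (by norm_num)]
          calc (1/2 : ℝ)⁻¹ = 2 ^ 1 := by norm_num
            _ ≤ 2 ^ (j+1) := pow_le_pow_right₀ (by norm_num) (by omega)
        have hrp : (0:ℝ) < (r ^ (j+1))⁻¹ := by positivity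
        have hhalf : ((2*r) ^ (j+1))⁻¹ ≤ (1/2) * (r ^ (j+1))⁻¹ := by
          rw [mul_pow, mul_inv]
          exact mul_le_mul_of_nonneg_right h2p hrp.le
        have hcoef : (0:ℝ) < -Lg / ((j:ℝ)+1) := div_pos (by linarith) (by positivity)
        have h5 : ψ r - ψ (2*r) ≥ (-Lg) / (2 * ((j:ℝ)+1)) * (r ^ (j+1))⁻¹ := by
          rw [hψ]
          simp only
          have h6 := mul_le_mul_of_nonneg_left hhalf hcoef.le
          have h7 : (-Lg) / (2 * ((j:ℝ)+1)) * (r ^ (j+1))⁻¹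
              = -Lg / ((j:ℝ)+1) * ((1/2) * (r ^ (j+1))⁻¹) := by
            field_simp
            try ring
            try exact Or.inl trivial
          rw [h7]
          linarith [h6]
        linarith [h3, h5, hu2r]
      have hf1 : ∀ r, A ≤ r → (-Lg) / (2 * ((j:ℝ)+1)) * r ^ 1 ≤ f r := by
        intro r hr
        have h0r := hr0 r hr
        have h1 := hulow r hr
        have hp : (0:ℝ) < r ^ (j+1) := pow_pos h0r _
        have h2 : r ^ (j+1+1) * ((-Lg) / (2 * ((j:ℝ)+1)) * (r ^ (j+1))⁻¹) ≤ r ^ (j+1+1) * u r :=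
          mul_le_mul_of_nonneg_left h1 (pow_pos h0r _).le
        have hkey2 : r ^ (j+1+1) * (r ^ (j+1))⁻¹ = r := by
          rw [pow_succ, mul_comm (r ^ (j+1)) r, mul_assoc,
            mul_inv_cancel₀ (pow_ne_zero _ h0r.ne'), mul_one]
        calc (-Lg) / (2 * ((j:ℝ)+1)) * r ^ 1
            = r ^ (j+1+1) * ((-Lg) / (2 * ((j:ℝ)+1)) * (r ^ (j+1))⁻¹) := by
              rw [show r ^ (j+1+1) * ((-Lg) / (2 * ((j:ℝ)+1)) * (r ^ (j+1))⁻¹)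
                  = r ^ (j+1+1) * (r ^ (j+1))⁻¹ * ((-Lg) / (2 * ((j:ℝ)+1))) from by ring,
                hkey2]
              ring
          _ ≤ r ^ (j+1+1) * u r := h2
          _ ≤ f r := hfge r hr
      have hcp : (0:ℝ) < (-Lg) / (2 * ((j:ℝ)+1)) := div_pos (by linarith) (by positivity)
      obtain ⟨r, h1, h2⟩ := ((P3aux_poly_growth hgderiv hf1 hcp).and
        (eventually_ge_atTop A)).exists
      have h3 := hgneg r h2
      have hcp2 : (0:ℝ) < (-Lg) / (2 * ((j:ℝ)+1)) / (2 * (((1:ℕ):ℝ) + 1)) :=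
        div_pos hcp (by positivity)
      nlinarith [mul_pos hcp2 (pow_pos (hr0 r h2) 2)]
  have hgtend : Tendsto g atTop (𝓝 0) := hLgz ▸ hLgtend
  -- continuity and integrability
  have hVcont : ContinuousOn V (Ici A) :=
    hVC2.continuousOn.mono (fun x hx => lt_of_lt_of_le hA0 hx)
  have hucontA : ContinuousOn u (Ici A) := hucont.mono (Ici_subset_Ici.2 hA0.le)
  set w : ℝ → ℝ := fun r => r ^ (m+1) * u r with hwdef
  have hwcont : ContinuousOn w (Ici A) :=
    (continuous_pow (m+1)).continuousOn.mul hucontA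
  have hfcont : ContinuousOn f (Ici A) := by
    rw [hfdef]
    refine (continuous_pow (m+1)).continuousOn.mul (hucontA.mul (hVcont.sub ?_))
    refine ContinuousOn.log (hucontA.pow 2) ?_
    intro x hx
    exact pow_ne_zero _ (hupos x (hr0 x hx)).ne'
  have hsub : ∀ {p q : ℝ}, A ≤ p → A ≤ q → uIcc p q ⊆ Ici A := by
    intro p q hp hq x hx
    rcases le_total p q with h | h
    · rw [uIcc_of_le h] at hx; exact le_trans hp hx.1
    · rw [uIcc_of_ge h] at hx; exact le_trans hq hx.1
  have hwint : ∀ {p q : ℝ}, A ≤ p → A ≤ q → IntervalIntegrable w volume p q :=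
    fun hp hq => (hwcont.mono (hsub hp hq)).intervalIntegrable
  have hfint : ∀ {p q : ℝ}, A ≤ p → A ≤ q → IntervalIntegrable f volume p q :=
    fun hp hq => (hfcont.mono (hsub hp hq)).intervalIntegrable
  set H : ℝ → ℝ := fun T => ∫ s in A..T, w s with hHdef
  have hHle : ∀ T, A ≤ T → H T ≤ -(g A) := by
    intro T hT
    have h1 : H T ≤ ∫ s in A..T, f s := by
      apply intervalIntegral.integral_mono_on hT (hwint le_rfl hT) (hfint le_rfl hT)
      intro x hx; exact hfge x hx.1
    have h2 : ∫ s in A..T, f s = g T - g A := by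
      apply intervalIntegral.integral_eq_sub_of_hasDerivAt
      · intro x hx
        rw [uIcc_of_le hT] at hx
        exact hgderiv x hx.1
      · exact hfint le_rfl hT
    have h3 := hgneg T hT
    linarith
  have hHmono : MonotoneOn H (Ici A) := by
    intro p hp q hq hpq
    have hadj := intervalIntegral.integral_add_adjacent_intervals
      (hwint le_rfl hp) (hwint hp hq)
    have h4 : 0 ≤ ∫ s in p..q, w s := by
      apply intervalIntegral.integral_nonneg hpq
      intro x hx
      have hux : 0 < u x := hupos x (hr0 x (le_trans hp hx.1))
      have hx0 : 0 < x := hr0 x (le_trans hp hx.1)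
      positivity
    simp only [hHdef]
    linarith [hadj]
  obtain ⟨S, hS1, hStend, hS2⟩ := P3aux_tendsto_sSup hHmono hHle
  have hhalftend : Tendsto (fun r : ℝ => H r - H (r/2)) atTop (𝓝 0) := by
    have h2 : Tendsto (fun r : ℝ => r / 2) atTop atTop :=
      tendsto_id.atTop_div_const two_pos
    have h3 := hStend.sub (hStend.comp h2)
    simpa using h3
  have hkey3 : ∀ r, 2 * A ≤ r → (r/2) ^ (m+2) * u r ≤ H r - H (r/2) := by
    intro r hr
    have hA2 : A ≤ r / 2 := by linarith
    have hAr : A ≤ r := by linarith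
    have h0r := hr0 r hAr
    have hadj := intervalIntegral.integral_add_adjacent_intervals
      (hwint le_rfl hA2) (hwint hA2 hAr)
    have hlow : ∀ x ∈ Icc (r/2) r, (r/2) ^ (m+1) * u r ≤ w x := by
      intro x hx
      have hx0 : 0 < x := hr0 x (le_trans hA2 hx.1)
      have h1 : u r ≤ u x := huanti (mem_Ici.2 (le_trans hA2 hx.1)) (mem_Ici.2 hAr) hx.2
      have h2 : (r/2) ^ (m+1) ≤ x ^ (m+1) := pow_le_pow_left₀ (by linarith) hx.1 _
      have hur : 0 < u r := hupos r h0r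
      calc (r/2)^(m+1) * u r ≤ x^(m+1) * u r := mul_le_mul_of_nonneg_right h2 hur.le
        _ ≤ x^(m+1) * u x := mul_le_mul_of_nonneg_left h1 (by positivity)
    have h5 : ∫ _ in (r/2)..r, ((r/2) ^ (m+1) * u r) ≤ ∫ s in (r/2)..r, w s := by
      apply intervalIntegral.integral_mono_on (by linarith)
        intervalIntegrable_const (hwint hA2 hAr) hlow
    rw [intervalIntegral.integral_const, smul_eq_mul] at h5
    have h6 : (r - r/2) * ((r/2) ^ (m+1) * u r) = (r/2)^(m+2) * u r := by
      have hrr : r - r/2 = r/2 := by ring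
      rw [hrr, pow_succ]
      ring
    simp only [hHdef]
    linarith [h5, hadj]
  have hrwu : Tendsto (fun r : ℝ => r ^ (m+2) * u r) atTop (𝓝 0) := by
    have h7 : Tendsto (fun r : ℝ => (2:ℝ)^(m+2) * (H r - H (r/2))) atTop (𝓝 0) := by
      have := hhalftend.const_mul ((2:ℝ)^(m+2))
      simpa using this
    apply tendsto_of_tendsto_of_tendsto_of_le_of_le' tendsto_const_nhds h7
    · filter_upwards [eventually_ge_atTop A] with r hrA
      have hur := hupos r (hr0 r hrA)
      have hr0' := hr0 r hrA
      positivity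
    · filter_upwards [eventually_ge_atTop (2*A)] with r hr2A
      have h8 := hkey3 r hr2A
      have h9 : r ^ (m+2) * u r = 2^(m+2) * ((r/2)^(m+2) * u r) := by
        rw [div_pow]
        field_simp
      rw [h9]
      exact mul_le_mul_of_nonneg_left h8 (by positivity)
  -- eventual smallness of u
  have huev1 : ∀ᶠ r in atTop, u r ≤ 1 := by
    have h1 := hu0.eventually (Metric.ball_mem_nhds (0:ℝ) one_pos)
    filter_upwards [h1] with r hr
    simp only [Metric.mem_ball, Real.dist_eq, sub_zero, abs_lt] at hr
    linarith [hr.2]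
  set F : ℝ → ℝ := fun r => r ^ (m+1) * ((V r + δ * a r) * u r) with hFdef
  have hFf : ∀ᶠ r in atTop, F r ≤ f r := by
    filter_upwards [huev1, eventually_ge_atTop A] with r h1 h2
    have h0r := hr0 r h2
    have hur := hupos r h0r
    have hlog : Real.log (u r ^ 2) ≤ 0 :=
      Real.log_nonpos (by positivity) (by nlinarith)
    simp only [hFdef, hfdef]
    rw [(hab0 r h2).1]
    have hp : (0:ℝ) < r^(m+1) := pow_pos h0r _
    nlinarith [mul_nonneg (mul_nonneg hp.le hur.le) (neg_nonneg.2 hlog)]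
  have hFlow : ∀ᶠ r in atTop, -((|θ|+|M|) * (r^(m+2) * u r)) ≤ F r := by
    filter_upwards [eventually_ge_atTop A] with r h2
    have h0r := hr0 r h2
    have hur := hupos r h0r
    have h1r := hr1 r h2
    have hVb := (hP r h2).1.1
    have hlog0 : 0 ≤ Real.log r := Real.log_nonneg h1r
    have hlogr : Real.log r ≤ r := by linarith [Real.log_le_sub_one_of_pos h0r]
    have hVlow : -((|θ| + |M|) * r) ≤ V r := by
      have h3 : -(|θ| * Real.log r) ≤ θ * Real.log r := by
        nlinarith [neg_abs_le θ, le_abs_self θ]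
      have h4 : |θ| * Real.log r ≤ |θ| * r := mul_le_mul_of_nonneg_left hlogr (abs_nonneg θ)
      have h5 : -|M| ≤ M := neg_abs_le M
      have h6 : |M| ≤ |M| * r := le_mul_of_one_le_right (abs_nonneg M) h1r
      nlinarith
    simp only [hFdef]
    rw [(hab0 r h2).1]
    have hw0 : (0:ℝ) ≤ r^(m+1) * u r := by positivity
    have h7 : -((|θ|+|M|) * r) * (r^(m+1) * u r) ≤ V r * (r^(m+1) * u r) :=
      mul_le_mul_of_nonneg_right hVlow hw0
    have h8 : -((|θ|+|M|) * r) * (r^(m+1) * u r) = -((|θ|+|M|) * (r^(m+2) * u r)) := by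
      rw [pow_succ]; ring
    have h9 : r ^ (m+1) * ((V r + δ * 0) * u r) = V r * (r^(m+1) * u r) := by ring
    rw [h9]
    linarith
  have hlbtend : Tendsto (fun r : ℝ => -((|θ|+|M|) * (r^(m+2) * u r))) atTop (𝓝 0) := by
    have := (hrwu.const_mul (|θ|+|M|)).neg
    simpa using this
  have hfreq : ∀ c : ℝ, 0 < c → ∃ᶠ r in atTop, f r < c := by
    intro c hc
    by_contra hcon
    rw [not_frequently] at hcon
    simp only [not_lt] at hcon
    obtain ⟨B, hB⟩ := (hcon.and (eventually_ge_atTop A)).exists_forall_of_atTop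
    set B' : ℝ := max B A with hB'def
    have hder : ∀ r, B' ≤ r → HasDerivAt g (f r) r := fun r hr =>
      hgderiv r (le_trans (le_max_right _ _) hr)
    have hline : ∀ r, B' ≤ r → HasDerivAt (fun x : ℝ => c * x) c r := fun r _ => by
      simpa using (hasDerivAt_id r).const_mul c
    have key := P3aux_diff_le hline hder (fun r hr =>
      (hB r (le_trans (le_max_left _ _) hr)).1)
    have hq : 0 ≤ (-(g B'))/c := div_nonneg (by
      have := hgneg B' (le_max_right _ _); linarith) hc.le
    have hrB' : B' ≤ B' + (-(g B'))/c + 1 := by linarith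
    have h1 := key (B' + (-(g B'))/c + 1) hrB'
    have h2 : c * (B' + (-(g B'))/c + 1) - c * B' = -(g B') + c := by
      field_simp
      ring
    have h3 := hgneg (B' + (-(g B'))/c + 1) (le_trans (le_max_right _ _) hrB')
    linarith
  have hFfreq : ∀ c : ℝ, 0 < c → ∃ᶠ r in atTop, F r ≤ c := by
    intro c hc
    have := (hfreq c hc).and_eventually hFf
    exact this.mono (fun r hr => le_of_lt (lt_of_le_of_lt hr.2 hr.1))
  have hbddF : Filter.IsBoundedUnder (· ≥ ·) atTop F := by
    refine ⟨-1, ?_⟩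
    rw [Filter.eventually_map]
    filter_upwards [hFlow, hlbtend.eventually (eventually_ge_nhds
      (show (-1:ℝ) < 0 from by norm_num))] with r h1 h2
    linarith
  have hcobF : Filter.IsCoboundedUnder (· ≥ ·) atTop F :=
    Filter.IsCoboundedUnder.of_frequently_le (hFfreq 1 one_pos)
  have hliminf : Filter.liminf F atTop = 0 := by
    apply le_antisymm
    · by_contra hcon
      push_neg at hcon
      have h1 : Filter.liminf F atTop ≤ Filter.liminf F atTop / 2 :=
        Filter.liminf_le_of_frequently_le (hFfreq _ (by linarith)) hbddF
      linarith
    · by_contra hcon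
      push_neg at hcon
      have h2 : ∀ᶠ r in atTop, Filter.liminf F atTop / 2 ≤ F r := by
        filter_upwards [hFlow, hlbtend.eventually (eventually_ge_nhds
          (show Filter.liminf F atTop / 2 < 0 from by linarith))] with r ha hb
        linarith
      have h3 : Filter.liminf F atTop / 2 ≤ Filter.liminf F atTop :=
        Filter.le_liminf_of_le hcobF h2
      linarith
  exact ⟨⟨A, hA0, fun r hr => hu'neg r hr⟩, hgtend, hliminf⟩
end
end
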